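/- arXiv:1404.5438 — 3 statements merged into one kernel-verified Lean document; each statement's English description precedes it below -/
import Mathlib

section
/- There exists a constant C > 0 such that for every bounded measurable function Ψ : ℝ → ℝ and all points x = (x₁,x₂), y = (y₁,y₂) ∈ ℝ² with x₁ > 0 and y₁ > 0, one has |∫_ℝ [G(x₁, x₂−z) − G(y₁, y₂−z) − (x₂−y₂)·(∂₂G)(y₁, y₂−z)] Ψ(z) dz| ≤ C ‖Ψ‖_{L^∞(ℝ)} · (|x₁−y₁| + |x₂−y₂|²) / min(x₁, y₁), where ∂₂G denotes the spatial derivative of G. -/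
noncomputable section

open MeasureTheory

/-- The one-dimensional heat kernel on `ℝ²`. -/
def heatG : ℝ × ℝ → ℝ := fun p =>
  if 0 < p.1 then (4 * Real.pi * p.1) ^ (-(1:ℝ)/2) * Real.exp (-(p.2 ^ 2) / (4 * p.1)) else 0

open Real

/-- convenient closed form -/
def gg (t x : ℝ) : ℝ := rexp (-x^2/(4*t)) / (2 * Real.sqrt π * Real.sqrt t)

lemma sqrt4 : Real.sqrt 4 = 2 := by
  rw [show (4:ℝ) = 2^2 by norm_num, Real.sqrt_sq (by norm_num)]

lemma heatG_eq {t : ℝ} (ht : 0 < t) (x : ℝ) : heatG (t, x) = gg t x := by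
  unfold heatG gg
  rw [if_pos ht]
  have h1 : (4 * π * t : ℝ) ^ (-(1:ℝ)/2) = (Real.sqrt (4 * π * t))⁻¹ := by
    rw [show (-(1:ℝ)/2) = -(1/2) by ring, Real.rpow_neg (by positivity),
      ← Real.sqrt_eq_rpow]
  have h2 : Real.sqrt (4 * π * t) = 2 * Real.sqrt π * Real.sqrt t := by
    rw [Real.sqrt_mul (by positivity), Real.sqrt_mul (by norm_num), sqrt4]
  rw [h1, h2, ← div_eq_inv_mul]

lemma gg_nonneg {t : ℝ} (x : ℝ) : 0 ≤ gg t x := by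
  unfold gg; positivity

lemma gg_hasDerivAt_x {t : ℝ} (ht : 0 < t) (x : ℝ) :
    HasDerivAt (gg t) (-(x/(2*t)) * gg t x) x := by
  have h : HasDerivAt (fun w : ℝ => -w^2/(4*t)) (-(2*x)/(4*t)) x := by
    have := ((hasDerivAt_pow 2 x).neg).div_const (4*t)
    simpa using this
  have h2 := h.exp.div_const (2 * Real.sqrt π * Real.sqrt t)
  refine h2.congr_deriv ?_
  unfold gg
  field_simp
  ring

lemma gg_hasDerivAt_x2 {t : ℝ} (ht : 0 < t) (x : ℝ) :
    HasDerivAt (fun w => -(w/(2*t)) * gg t w) ((x^2/(4*t^2) - 1/(2*t)) * gg t x) x := by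
  have h1 : HasDerivAt (fun w : ℝ => -(w/(2*t))) (-(1/(2*t))) x := by
    exact ((hasDerivAt_id x).div_const (2*t)).neg
  have := h1.mul (gg_hasDerivAt_x ht x)
  refine this.congr_deriv ?_
  ring

lemma gg_hasDerivAt_t {t : ℝ} (ht : 0 < t) (x : ℝ) :
    HasDerivAt (fun s => gg s x) ((x^2/(4*t^2) - 1/(2*t)) * gg t x) t := by
  have hA : HasDerivAt (fun s : ℝ => -x^2/(4*s)) (x^2/(4*t^2)) t := by
    have h0 : HasDerivAt (fun s : ℝ => (-x^2/4) * s⁻¹) ((-x^2/4) * (-(t^2)⁻¹)) t :=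
      (hasDerivAt_inv (ne_of_gt ht)).const_mul _
    have he : (fun s : ℝ => -x^2/(4*s)) = fun s : ℝ => (-x^2/4) * s⁻¹ := by
      funext s; rw [div_eq_mul_inv, div_eq_mul_inv, mul_inv]; ring
    rw [he]
    convert h0 using 1
    field_simp
  have hB := hA.exp
  have hC : HasDerivAt (fun s : ℝ => 2 * Real.sqrt π * Real.sqrt s)
      (2 * Real.sqrt π * (1/(2 * Real.sqrt t))) t := by
    exact (Real.hasDerivAt_sqrt (ne_of_gt ht)).const_mul _
  have hne : 2 * Real.sqrt π * Real.sqrt t ≠ 0 := by positivity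
  have := hB.div hC hne
  refine this.congr_deriv ?_
  unfold gg
  have hS : Real.sqrt t * Real.sqrt t = t := Real.mul_self_sqrt ht.le
  have hS0 : Real.sqrt t ≠ 0 := by positivity
  have hP0 : Real.sqrt π ≠ 0 := by positivity
  set S := Real.sqrt t with hSdef
  set P := Real.sqrt π with hPdef
  set E := rexp (-x^2/(4*t)) with hEdef
  rw [show t = S*S from hS.symm]
  field_simp

lemma aux_exp1 (u : ℝ) (hu : 0 ≤ u) : u * rexp (-u) ≤ 1 := by
  rw [Real.exp_neg, mul_inv_le_iff₀ (Real.exp_pos u)]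
  nlinarith [Real.add_one_le_exp u]

lemma exp_half_le_two : rexp (1/2) ≤ 2 := by
  nlinarith [Real.exp_pos (1/2), Real.exp_one_lt_d9,
    (by rw [← Real.exp_add]; norm_num : rexp (1/2) * rexp (1/2) = rexp 1)]

lemma exp_eighth_le_two : rexp (1/8) ≤ 2 := by
  have h1 : rexp (1/8) * rexp (-(1/8)) = 1 := by rw [← Real.exp_add]; norm_num
  nlinarith [Real.add_one_le_exp (-(1/8) : ℝ), Real.exp_pos (-(1/8):ℝ), Real.exp_pos (1/8:ℝ)]

lemma aux_sq_exp {t : ℝ} (ht : 0 < t) (x : ℝ) : x^2 * rexp (-x^2/(8*t)) ≤ 8*t := by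
  have h := aux_exp1 (x^2/(8*t)) (by positivity)
  rw [div_mul_eq_mul_div, div_le_one (by positivity)] at h
  calc x^2 * rexp (-x^2/(8*t)) = x^2 * rexp (-(x^2/(8*t))) := by rw [neg_div]
    _ ≤ 8*t := by linarith [h]

lemma aux_abs_exp {t : ℝ} (ht : 0 < t) (x : ℝ) :
    |x| * rexp (-x^2/(8*t)) ≤ 4 * Real.sqrt t := by
  set S := Real.sqrt t with hSdef
  have hS : S * S = t := Real.mul_self_sqrt ht.le
  have hS0 : 0 < S := Real.sqrt_pos.mpr ht
  have h1 : |x|/(2*S) ≤ 1/2 + x^2/(8*t) := by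
    have he : 1/2 + x^2/(8*t) = (4*t + x^2)/(8*t) := by field_simp; ring
    rw [he, div_le_div_iff₀ (by positivity) (by positivity)]
    nlinarith [mul_nonneg hS0.le (sq_nonneg (|x| - 2*S)), sq_abs x]
  have h2 : rexp (-x^2/(8*t)) ≤ rexp (1/2) * rexp (-(|x|/(2*S))) := by
    rw [← Real.exp_add]
    apply Real.exp_le_exp.mpr
    have : -x^2/(8*t) = -(x^2/(8*t)) := by rw [neg_div]
    rw [this]; linarith
  have h3 : (|x|/(2*S)) * rexp (-(|x|/(2*S))) ≤ 1 := aux_exp1 _ (by positivity)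
  have h4 : |x| * rexp (-(|x|/(2*S))) ≤ 2*S := by
    rw [div_mul_eq_mul_div, div_le_one (by positivity)] at h3
    linarith
  calc |x| * rexp (-x^2/(8*t)) ≤ |x| * (rexp (1/2) * rexp (-(|x|/(2*S)))) :=
        mul_le_mul_of_nonneg_left h2 (abs_nonneg x)
    _ = rexp (1/2) * (|x| * rexp (-(|x|/(2*S)))) := by ring
    _ ≤ 2 * (2*S) := mul_le_mul exp_half_le_two h4 (by positivity) (by norm_num)
    _ = 4 * S := by ring

lemma core2 {t : ℝ} (ht : 0 < t) (x : ℝ) :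
    |x^2/(4*t^2) - 1/(2*t)| * rexp (-x^2/(4*t)) ≤ 3/t * rexp (-x^2/(8*t)) := by
  set E := rexp (-x^2/(8*t)) with hE
  have hEpos : 0 < E := Real.exp_pos _
  have hEle : E ≤ 1 := by
    rw [hE]
    apply Real.exp_le_one_iff.mpr
    rw [neg_div]
    exact neg_nonpos.mpr (by positivity)
  have hsplit : rexp (-x^2/(4*t)) = E * E := by
    rw [hE, ← Real.exp_add]
    congr 1
    field_simp
    ring
  have habs : |x^2/(4*t^2) - 1/(2*t)| ≤ x^2/(4*t^2) + 1/(2*t) := by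
    have h1 : (0:ℝ) ≤ x^2/(4*t^2) := by positivity
    have h2 : (0:ℝ) ≤ 1/(2*t) := by positivity
    apply abs_le.mpr ⟨by linarith, by linarith⟩
  have key1 : x^2/(4*t^2) * E ≤ 2/t := by
    rw [div_mul_eq_mul_div, div_le_div_iff₀ (by positivity) ht]
    nlinarith [aux_sq_exp ht x]
  have key2 : 1/(2*t) * E ≤ 1/t := by
    rw [div_mul_eq_mul_div, div_le_div_iff₀ (by positivity) ht]
    nlinarith
  calc |x^2/(4*t^2) - 1/(2*t)| * rexp (-x^2/(4*t))
      = |x^2/(4*t^2) - 1/(2*t)| * E * E := by rw [hsplit]; ring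
    _ ≤ (x^2/(4*t^2) + 1/(2*t)) * E * E := by
        apply mul_le_mul_of_nonneg_right _ hEpos.le
        exact mul_le_mul_of_nonneg_right habs hEpos.le
    _ = (x^2/(4*t^2)*E + 1/(2*t)*E) * E := by ring
    _ ≤ (2/t + 1/t) * E := by
        apply mul_le_mul_of_nonneg_right (by linarith) hEpos.le
    _ = 3/t * E := by ring

lemma core1 {t : ℝ} (ht : 0 < t) (x : ℝ) :
    |x|/(2*t) * rexp (-x^2/(4*t)) ≤ 2/Real.sqrt t * rexp (-x^2/(8*t)) := by
  set S := Real.sqrt t with hSdef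
  have hS : S * S = t := Real.mul_self_sqrt ht.le
  have hS0 : 0 < S := Real.sqrt_pos.mpr ht
  set E := rexp (-x^2/(8*t)) with hE
  have hEpos : 0 < E := Real.exp_pos _
  have hsplit : rexp (-x^2/(4*t)) = E * E := by
    rw [hE, ← Real.exp_add]
    congr 1
    field_simp
    ring
  have h1 : |x| * E ≤ 4 * S := aux_abs_exp ht x
  calc |x|/(2*t) * rexp (-x^2/(4*t)) = (|x| * E) * E / (2*t) := by rw [hsplit]; ring
    _ ≤ (4*S) * E / (2*t) := by
        apply div_le_div_of_nonneg_right _ (by positivity)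
        exact mul_le_mul_of_nonneg_right h1 hEpos.le
    _ = 2/S * E := by
        rw [show t = S*S from hS.symm]
        field_simp
        ring

lemma one_le_sqrt_pi : 1 ≤ Real.sqrt π := by
  have h := Real.sqrt_le_sqrt (by linarith [Real.pi_gt_three] : (1:ℝ) ≤ π)
  rwa [Real.sqrt_one] at h

lemma bound_snd {t : ℝ} (ht : 0 < t) (x : ℝ) :
    |(x^2/(4*t^2) - 1/(2*t)) * gg t x| ≤ (3/2)/(t*Real.sqrt t) * rexp (-x^2/(8*t)) := by
  set S := Real.sqrt t with hSdef
  have hS : S * S = t := Real.mul_self_sqrt ht.le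
  have hS0 : 0 < S := Real.sqrt_pos.mpr ht
  have hP1 : 1 ≤ Real.sqrt π := one_le_sqrt_pi
  rw [abs_mul, abs_of_nonneg (gg_nonneg x)]
  unfold gg
  rw [mul_div_assoc'] -- |A| * (e/(c)) = |A| * e / c
  calc |x^2/(4*t^2) - 1/(2*t)| * rexp (-x^2/(4*t)) / (2 * Real.sqrt π * S)
      ≤ (3/t * rexp (-x^2/(8*t))) / (2 * Real.sqrt π * S) := by
        apply div_le_div_of_nonneg_right (core2 ht x) (by positivity)
    _ ≤ (3/t * rexp (-x^2/(8*t))) / (2 * 1 * S) := by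
        apply div_le_div_of_nonneg_left (by positivity) (by positivity)
        have : (0:ℝ) < 2 * 1 * S := by positivity
        nlinarith
    _ = (3/2)/(t*S) * rexp (-x^2/(8*t)) := by
        field_simp

lemma bound_fst {t : ℝ} (ht : 0 < t) (x : ℝ) :
    |(-(x/(2*t))) * gg t x| ≤ 1/t * rexp (-x^2/(8*t)) := by
  set S := Real.sqrt t with hSdef
  have hS : S * S = t := Real.mul_self_sqrt ht.le
  have hS0 : 0 < S := Real.sqrt_pos.mpr ht
  have hP1 : 1 ≤ Real.sqrt π := one_le_sqrt_pi
  rw [abs_mul, abs_of_nonneg (gg_nonneg x), abs_neg, abs_div, abs_of_nonneg (by positivity : (0:ℝ) ≤ 2*t)]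
  unfold gg
  rw [mul_div_assoc']
  calc |x|/(2*t) * rexp (-x^2/(4*t)) / (2 * Real.sqrt π * S)
      ≤ (2/S * rexp (-x^2/(8*t))) / (2 * Real.sqrt π * S) := by
        apply div_le_div_of_nonneg_right (core1 ht x) (by positivity)
    _ ≤ (2/S * rexp (-x^2/(8*t))) / (2 * 1 * S) := by
        apply div_le_div_of_nonneg_left (by positivity) (by positivity)
        have : (0:ℝ) < 2 * 1 * S := by positivity
        nlinarith
    _ = 1/t * rexp (-x^2/(8*t)) := by
        rw [show t = S*S from hS.symm]
        field_simp

lemma int_exp_base {c : ℝ} (hc : 0 < c) : Integrable (fun x : ℝ => rexp (-x^2/c)) := by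
  have h2 : (fun x : ℝ => rexp (-x^2/c)) = fun x : ℝ => rexp (-(1/c) * x^2) := by
    funext x; congr 1; field_simp
  rw [h2]
  exact integrable_exp_neg_mul_sq (by positivity)

lemma int_exp_eval {c : ℝ} (hc : 0 < c) :
    ∫ x : ℝ, rexp (-x^2/c) = Real.sqrt (π * c) := by
  have h2 : (fun x : ℝ => rexp (-x^2/c)) = fun x : ℝ => rexp (-(1/c) * x^2) := by
    funext x; congr 1; field_simp
  rw [h2, integral_gaussian]
  congr 1
  field_simp

lemma int_shift_base {c : ℝ} (aa : ℝ) (hc : 0 < c) :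
    Integrable (fun z : ℝ => rexp (-(aa - z)^2/c)) :=
  (int_exp_base hc).comp_sub_left aa

lemma int_shift_eval {c : ℝ} (aa : ℝ) (hc : 0 < c) :
    ∫ z : ℝ, rexp (-(aa - z)^2/c) = Real.sqrt (π * c) := by
  rw [show (fun z : ℝ => rexp (-(aa - z)^2/c)) = fun z => (fun x : ℝ => rexp (-x^2/c)) (aa - z) from rfl]
  rw [integral_sub_left_eq_self (fun x : ℝ => rexp (-x^2/c)) volume aa]
  exact int_exp_eval hc

lemma gg_cont {t : ℝ} : Continuous (gg t) := by
  unfold gg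
  fun_prop

lemma int_gg {t : ℝ} (a : ℝ) (ht : 0 < t) : Integrable (fun z : ℝ => gg t (a - z)) := by
  have : (fun z : ℝ => gg t (a - z)) = fun z => rexp (-(a-z)^2/(4*t)) / (2 * Real.sqrt π * Real.sqrt t) := rfl
  rw [this]
  exact (int_shift_base a (by positivity)).div_const _

lemma int_gg_eval {t : ℝ} (a : ℝ) (ht : 0 < t) : ∫ z : ℝ, gg t (a - z) = 1 := by
  have h1 : ∫ z : ℝ, gg t (a - z)
      = (∫ z : ℝ, rexp (-(a-z)^2/(4*t))) / (2 * Real.sqrt π * Real.sqrt t) := by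
    rw [← integral_div]
    rfl
  rw [h1, int_shift_eval a (by positivity)]
  rw [show π * (4*t) = 4 * (π * t) by ring, Real.sqrt_mul (by norm_num : (0:ℝ) ≤ 4),
    sqrt4, Real.sqrt_mul Real.pi_pos.le]
  have hP : (0:ℝ) < Real.sqrt π := Real.sqrt_pos.mpr Real.pi_pos
  have hS : (0:ℝ) < Real.sqrt t := Real.sqrt_pos.mpr ht
  field_simp

lemma cont_fprime {t : ℝ} : Continuous (fun w : ℝ => -(w/(2*t)) * gg t w) := by
  unfold gg; fun_prop

lemma int_fprime {t : ℝ} (b : ℝ) (ht : 0 < t) :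
    Integrable (fun z : ℝ => -((b-z)/(2*t)) * gg t (b-z)) := by
  apply Integrable.mono' (((int_shift_base b (by positivity : (0:ℝ) < 8*t))).const_mul (1/t))
  · exact (cont_fprime.comp (continuous_const.sub continuous_id)).aestronglyMeasurable
  · filter_upwards with z
    rw [Real.norm_eq_abs]
    exact bound_fst ht (b - z)

lemma time_pt {t₁ t₂ : ℝ} (h1 : 0 < t₁) (h12 : t₁ ≤ t₂) (x : ℝ) :
    |gg t₂ x - gg t₁ x| ≤ (t₂ - t₁) * ((3/2)/(t₁*Real.sqrt t₁) * rexp (-x^2/(8*t₂))) := by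
  have h2 : 0 < t₂ := lt_of_lt_of_le h1 h12
  have key := Convex.norm_image_sub_le_of_norm_hasDerivWithin_le
    (f := fun s => gg s x) (f' := fun s => (x^2/(4*s^2) - 1/(2*s)) * gg s x)
    (s := Set.Icc t₁ t₂) (C := (3/2)/(t₁*Real.sqrt t₁) * rexp (-x^2/(8*t₂)))
    (fun s hs => (gg_hasDerivAt_t (lt_of_lt_of_le h1 hs.1) x).hasDerivWithinAt)
    (fun s hs => ?_) (convex_Icc t₁ t₂) (Set.left_mem_Icc.mpr h12)
    (Set.right_mem_Icc.mpr h12)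
  · rw [Real.norm_eq_abs, Real.norm_eq_abs, abs_of_nonneg (by linarith : (0:ℝ) ≤ t₂ - t₁)] at key
    linarith [key]
  · have hs1 : 0 < s := lt_of_lt_of_le h1 hs.1
    rw [Real.norm_eq_abs]
    refine (bound_snd hs1 x).trans ?_
    have hm1 : t₁ * Real.sqrt t₁ ≤ s * Real.sqrt s :=
      mul_le_mul hs.1 (Real.sqrt_le_sqrt hs.1) (Real.sqrt_nonneg _) hs1.le
    have hm2 : rexp (-x^2/(8*s)) ≤ rexp (-x^2/(8*t₂)) := by
      apply Real.exp_le_exp.mpr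
      rw [neg_div, neg_div, neg_le_neg_iff]
      apply div_le_div_of_nonneg_left (sq_nonneg x) (by positivity) (by linarith [hs.2])
    have hq1 : (3/2)/(s*Real.sqrt s) ≤ (3/2)/(t₁*Real.sqrt t₁) := by
      apply div_le_div_of_nonneg_left (by norm_num) (by positivity) hm1
    exact mul_le_mul hq1 hm2 (Real.exp_pos _).le (by positivity)

lemma timeL1_ord {t₁ t₂ : ℝ} (h1 : 0 < t₁) (h12 : t₁ ≤ t₂) (a : ℝ) :
    ∫ z : ℝ, |gg t₂ (a-z) - gg t₁ (a-z)| ≤ 12 * (t₂ - t₁) / t₁ := by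
  have h2 : 0 < t₂ := lt_of_lt_of_le h1 h12
  have hint : Integrable (fun z : ℝ => |gg t₂ (a-z) - gg t₁ (a-z)|) :=
    ((int_gg a h2).sub (int_gg a h1)).abs
  by_cases hc : t₂ ≤ 2*t₁
  · set S1 := Real.sqrt t₁ with hS1def
    have hS1 : S1 * S1 = t₁ := Real.mul_self_sqrt h1.le
    have hS10 : 0 < S1 := Real.sqrt_pos.mpr h1
    have hR : Real.sqrt (π*(8*t₂)) ≤ 8*S1 := by
      have h64 : π*(8*t₂) ≤ 64*t₁ := by nlinarith [Real.pi_le_four, Real.pi_pos]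
      have h8 : Real.sqrt (64*t₁) = 8*S1 := by
        rw [show (64:ℝ)*t₁ = (8*S1)^2 by nlinarith [hS1], Real.sqrt_sq (by positivity)]
      calc Real.sqrt (π*(8*t₂)) ≤ Real.sqrt (64*t₁) := Real.sqrt_le_sqrt h64
        _ = 8*S1 := h8
    calc ∫ z : ℝ, |gg t₂ (a-z) - gg t₁ (a-z)|
        ≤ ∫ z : ℝ, (t₂-t₁) * ((3/2)/(t₁*S1) * rexp (-(a-z)^2/(8*t₂))) := by
          apply integral_mono hint
            (((int_shift_base a (by positivity : (0:ℝ) < 8*t₂)).const_mul _).const_mul _)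
            (fun z => time_pt h1 h12 (a-z))
      _ = (t₂-t₁) * ((3/2)/(t₁*S1) * Real.sqrt (π*(8*t₂))) := by
          rw [integral_const_mul, integral_const_mul, int_shift_eval a (by positivity)]
      _ ≤ 12 * (t₂-t₁) / t₁ := by
          have h0 : (0:ℝ) ≤ t₂ - t₁ := by linarith
          have key : (3/2)/(t₁*S1) * Real.sqrt (π*(8*t₂)) ≤ 12/t₁ := by
            calc (3/2)/(t₁*S1) * Real.sqrt (π*(8*t₂)) ≤ (3/2)/(t₁*S1) * (8*S1) :=
                  mul_le_mul_of_nonneg_left hR (by positivity)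
              _ = 12/t₁ := by field_simp; ring
          calc (t₂-t₁) * ((3/2)/(t₁*S1) * Real.sqrt (π*(8*t₂)))
              ≤ (t₂-t₁) * (12/t₁) := mul_le_mul_of_nonneg_left key h0
            _ = 12 * (t₂-t₁) / t₁ := by ring
  · push_neg at hc
    calc ∫ z : ℝ, |gg t₂ (a-z) - gg t₁ (a-z)|
        ≤ ∫ z : ℝ, (gg t₂ (a-z) + gg t₁ (a-z)) := by
          apply integral_mono hint ((int_gg a h2).add (int_gg a h1))
          intro z
          simp only [Pi.add_apply]
          have g1 := gg_nonneg (t := t₂) (a-z)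
          have g2 := gg_nonneg (t := t₁) (a-z)
          exact abs_le.mpr ⟨by linarith, by linarith⟩
      _ = 2 := by
          rw [integral_add (int_gg a h2) (int_gg a h1), int_gg_eval a h2, int_gg_eval a h1]
          norm_num
      _ ≤ 12 * (t₂-t₁) / t₁ := by
          rw [le_div_iff₀ h1]
          nlinarith

lemma timeL1 {t₁ t₂ : ℝ} (h1 : 0 < t₁) (h2 : 0 < t₂) (a : ℝ) :
    ∫ z : ℝ, |gg t₂ (a-z) - gg t₁ (a-z)| ≤ 12 * |t₂ - t₁| / min t₁ t₂ := by
  rcases le_total t₁ t₂ with h | h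
  · rw [min_eq_left h, abs_of_nonneg (sub_nonneg.mpr h)]
    exact timeL1_ord h1 h a
  · rw [min_eq_right h, abs_of_nonpos (sub_nonpos.mpr h)]
    calc ∫ z : ℝ, |gg t₂ (a-z) - gg t₁ (a-z)|
        = ∫ z : ℝ, |gg t₁ (a-z) - gg t₂ (a-z)| := by
          congr 1; funext z; rw [abs_sub_comm]
      _ ≤ 12 * (t₁ - t₂) / t₂ := timeL1_ord h2 h a
      _ = 12 * -(t₂ - t₁) / t₂ := by ring_nf

lemma abs_le_abs_of_sq {x y : ℝ} (h : x^2 ≤ y^2) : |x| ≤ |y| :=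
  abs_le.mpr (abs_le_of_sq_le_sq' (by rwa [sq_abs y]) (abs_nonneg y))

lemma segment_sq {w d u : ℝ} (hu : u ∈ Set.uIcc w (w + d)) : (u - w)^2 ≤ d^2 := by
  rcases Set.mem_uIcc.mp hu with ⟨h1, h2⟩ | ⟨h1, h2⟩ <;> nlinarith

lemma stepA {t d w : ℝ} (ht : 0 < t) (hd : d^2 ≤ t) :
    ∀ u ∈ Set.uIcc w (w + d),
      |(u^2/(4*t^2) - 1/(2*t)) * gg t u| ≤ 3/(t*Real.sqrt t) * rexp (-w^2/(16*t)) := by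
  intro u hu
  have husq : (u - w)^2 ≤ d^2 := segment_sq hu
  have hexp : rexp (-u^2/(8*t)) ≤ 2 * rexp (-w^2/(16*t)) := by
    have h1 : -u^2/(8*t) ≤ 1/8 + (-w^2/(16*t)) := by
      have he : (1:ℝ)/8 + (-w^2/(16*t)) = (2*t - w^2)/(16*t) := by field_simp; ring
      have he2 : -u^2/(8*t) = (-2*u^2)/(16*t) := by field_simp; ring
      rw [he, he2, div_le_div_iff₀ (by positivity) (by positivity)]
      nlinarith [sq_nonneg (2*u - w), ht]
    calc rexp (-u^2/(8*t)) ≤ rexp (1/8 + (-w^2/(16*t))) := Real.exp_le_exp.mpr h1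
      _ = rexp (1/8) * rexp (-w^2/(16*t)) := Real.exp_add _ _
      _ ≤ 2 * rexp (-w^2/(16*t)) :=
          mul_le_mul_of_nonneg_right exp_eighth_le_two (Real.exp_pos _).le
  calc |(u^2/(4*t^2) - 1/(2*t)) * gg t u| ≤ (3/2)/(t*Real.sqrt t) * rexp (-u^2/(8*t)) :=
        bound_snd ht u
    _ ≤ (3/2)/(t*Real.sqrt t) * (2 * rexp (-w^2/(16*t))) :=
        mul_le_mul_of_nonneg_left hexp (by positivity)
    _ = 3/(t*Real.sqrt t) * rexp (-w^2/(16*t)) := by ring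

lemma taylor_pt {t d : ℝ} (ht : 0 < t) (hd : d^2 ≤ t) (w : ℝ) :
    |gg t (w + d) - gg t w - d * (-(w/(2*t)) * gg t w)|
      ≤ d^2 * (3/(t*Real.sqrt t) * rexp (-w^2/(16*t))) := by
  set Φ := 3/(t*Real.sqrt t) * rexp (-w^2/(16*t)) with hΦ
  have hΦ0 : 0 ≤ Φ := by rw [hΦ]; positivity
  -- Step B : first derivative difference bound
  have hB : ∀ v ∈ Set.uIcc w (w + d),
      |(-(v/(2*t)) * gg t v) - (-(w/(2*t)) * gg t w)| ≤ Φ * |d| := by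
    intro v hv
    have key := Convex.norm_image_sub_le_of_norm_hasDerivWithin_le
      (f := fun u => -(u/(2*t)) * gg t u)
      (f' := fun u => (u^2/(4*t^2) - 1/(2*t)) * gg t u)
      (s := Set.uIcc w (w + d)) (C := Φ)
      (fun u _ => (gg_hasDerivAt_x2 ht u).hasDerivWithinAt)
      (fun u hu => by rw [Real.norm_eq_abs]; exact stepA ht hd u hu)
      (convex_uIcc _ _) Set.left_mem_uIcc hv
    rw [Real.norm_eq_abs, Real.norm_eq_abs] at key
    refine key.trans ?_
    apply mul_le_mul_of_nonneg_left _ hΦ0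
    exact abs_le_abs_of_sq (segment_sq hv)
  -- Step C : second mean value inequality
  have base : ∀ v : ℝ, HasDerivAt (fun v => gg t v - gg t w - (v - w) * (-(w/(2*t)) * gg t w))
      ((-(v/(2*t)) * gg t v) - (-(w/(2*t)) * gg t w)) v := by
    intro v
    have h1 := (gg_hasDerivAt_x ht v).sub_const (gg t w)
    have h2 : HasDerivAt (fun v : ℝ => (v - w) * (-(w/(2*t)) * gg t w))
        (-(w/(2*t)) * gg t w) v := by
      simpa using ((hasDerivAt_id v).sub_const w).mul_const (-(w/(2*t)) * gg t w)
    exact h1.sub h2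
  have key := Convex.norm_image_sub_le_of_norm_hasDerivWithin_le
    (f := fun v => gg t v - gg t w - (v - w) * (-(w/(2*t)) * gg t w))
    (f' := fun v => (-(v/(2*t)) * gg t v) - (-(w/(2*t)) * gg t w))
    (s := Set.uIcc w (w + d)) (C := Φ * |d|)
    (fun v _ => (base v).hasDerivWithinAt)
    (fun v hv => by rw [Real.norm_eq_abs]; exact hB v hv)
    (convex_uIcc _ _) Set.left_mem_uIcc Set.right_mem_uIcc
  simp only [sub_self, zero_mul, mul_zero, sub_zero, add_sub_cancel_left,
    Real.norm_eq_abs] at key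
  calc |gg t (w + d) - gg t w - d * (-(w/(2*t)) * gg t w)|
      ≤ Φ * |d| * |d| := key
    _ = d^2 * Φ := by rw [mul_assoc, abs_mul_abs_self]; ring
    _ = d^2 * (3/(t*Real.sqrt t) * rexp (-w^2/(16*t))) := by rw [hΦ]

lemma abs_sub' (a b : ℝ) : |a - b| ≤ |a| + |b| := by
  calc |a - b| = |a + -b| := by rw [sub_eq_add_neg]
    _ ≤ |a| + |-b| := abs_add_le _ _
    _ = |a| + |b| := by rw [abs_neg]

lemma spaceL1 {t : ℝ} (ht : 0 < t) (a b : ℝ) :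
    ∫ z : ℝ, |gg t (a-z) - gg t (b-z) - (a-b) * (-((b-z)/(2*t)) * gg t (b-z))|
      ≤ 24 * (a-b)^2 / t := by
  set S := Real.sqrt t with hSdef
  have hS : S * S = t := Real.mul_self_sqrt ht.le
  have hS0 : 0 < S := Real.sqrt_pos.mpr ht
  set d := a - b with hd
  have hint : Integrable (fun z : ℝ =>
      |gg t (a-z) - gg t (b-z) - (a-b) * (-((b-z)/(2*t)) * gg t (b-z))|) :=
    (((int_gg a ht).sub (int_gg b ht)).sub ((int_fprime b ht).const_mul (a-b))).abs
  by_cases hcase : d^2 ≤ t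
  · calc ∫ z : ℝ, |gg t (a-z) - gg t (b-z) - (a-b) * (-((b-z)/(2*t)) * gg t (b-z))|
        ≤ ∫ z : ℝ, d^2 * (3/(t*S) * rexp (-(b-z)^2/(16*t))) := by
          apply integral_mono hint
            (((int_shift_base b (by positivity : (0:ℝ) < 16*t)).const_mul _).const_mul _)
          intro z
          show |gg t (a-z) - gg t (b-z) - (a-b) * (-((b-z)/(2*t)) * gg t (b-z))|
            ≤ d^2 * (3/(t*S) * rexp (-(b-z)^2/(16*t)))
          have hz : a - z = (b - z) + d := by rw [hd]; ring
          rw [hz, ← hd]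
          exact taylor_pt ht hcase (b-z)
      _ = d^2 * (3/(t*S) * Real.sqrt (π*(16*t))) := by
          rw [integral_const_mul, integral_const_mul, int_shift_eval b (by positivity)]
      _ ≤ 24 * d^2 / t := by
          have hR : Real.sqrt (π*(16*t)) ≤ 8*S := by
            have h64 : π*(16*t) ≤ 64*t := by nlinarith [Real.pi_le_four, Real.pi_pos]
            have h8 : Real.sqrt (64*t) = 8*S := by
              rw [show (64:ℝ)*t = (8*S)^2 by nlinarith [hS], Real.sqrt_sq (by positivity)]
            calc Real.sqrt (π*(16*t)) ≤ Real.sqrt (64*t) := Real.sqrt_le_sqrt h64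
              _ = 8*S := h8
          calc d^2 * (3/(t*S) * Real.sqrt (π*(16*t)))
              ≤ d^2 * (3/(t*S) * (8*S)) := by
                apply mul_le_mul_of_nonneg_left
                  (mul_le_mul_of_nonneg_left hR (by positivity)) (sq_nonneg d)
            _ = 24 * d^2 / t := by field_simp; ring
  · push_neg at hcase
    have hdS : S ≤ |d| := by nlinarith [sq_abs d, abs_nonneg d, sq_nonneg (S - |d|), sq_nonneg (S + |d|)]
    calc ∫ z : ℝ, |gg t (a-z) - gg t (b-z) - (a-b) * (-((b-z)/(2*t)) * gg t (b-z))|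
        ≤ ∫ z : ℝ, (gg t (a-z) + gg t (b-z) + |d| * (1/t * rexp (-(b-z)^2/(8*t)))) := by
          have iA : Integrable (fun z : ℝ => gg t (a-z) + gg t (b-z)) :=
            (int_gg a ht).add (int_gg b ht)
          have iB : Integrable (fun z : ℝ => |d| * (1/t * rexp (-(b-z)^2/(8*t)))) :=
            ((int_shift_base b (by positivity : (0:ℝ) < 8*t)).const_mul (1/t)).const_mul |d|
          apply integral_mono hint (iA.add iB)
          intro z
          simp only [Pi.add_apply]
          have h1 : |gg t (a-z) - gg t (b-z) - (a-b) * (-((b-z)/(2*t)) * gg t (b-z))|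
              ≤ |gg t (a-z) - gg t (b-z)| + |(a-b) * (-((b-z)/(2*t)) * gg t (b-z))| :=
            abs_sub' _ _
          have h2 : |gg t (a-z) - gg t (b-z)| ≤ gg t (a-z) + gg t (b-z) := by
            have g1 := gg_nonneg (t := t) (a-z)
            have g2 := gg_nonneg (t := t) (b-z)
            exact abs_le.mpr ⟨by linarith, by linarith⟩
          have h3 : |(a-b) * (-((b-z)/(2*t)) * gg t (b-z))| ≤ |d| * (1/t * rexp (-(b-z)^2/(8*t))) := by
            rw [abs_mul, ← hd]
            exact mul_le_mul_of_nonneg_left (bound_fst ht (b-z)) (abs_nonneg d)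
          linarith
      _ = 1 + 1 + |d| * (1/t * Real.sqrt (π*(8*t))) := by
          have iA : Integrable (fun z : ℝ => gg t (a-z) + gg t (b-z)) :=
            (int_gg a ht).add (int_gg b ht)
          have iB : Integrable (fun z : ℝ => |d| * (1/t * rexp (-(b-z)^2/(8*t)))) :=
            ((int_shift_base b (by positivity : (0:ℝ) < 8*t)).const_mul (1/t)).const_mul |d|
          rw [integral_add iA iB, integral_add (int_gg a ht) (int_gg b ht),
            int_gg_eval a ht, int_gg_eval b ht,
            integral_const_mul, integral_const_mul, int_shift_eval b (by positivity)]
      _ ≤ 24 * d^2 / t := by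
          have hR : Real.sqrt (π*(8*t)) ≤ 6*S := by
            have h36 : π*(8*t) ≤ 36*t := by nlinarith [Real.pi_le_four, Real.pi_pos]
            have h6 : Real.sqrt (36*t) = 6*S := by
              rw [show (36:ℝ)*t = (6*S)^2 by nlinarith [hS], Real.sqrt_sq (by positivity)]
            calc Real.sqrt (π*(8*t)) ≤ Real.sqrt (36*t) := Real.sqrt_le_sqrt h36
              _ = 6*S := h6
          have h6 : |d| * (1/t * Real.sqrt (π*(8*t))) ≤ 6 * d^2 / t := by
            calc |d| * (1/t * Real.sqrt (π*(8*t))) ≤ |d| * (1/t * (6*S)) :=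
                  mul_le_mul_of_nonneg_left
                    (mul_le_mul_of_nonneg_left hR (by positivity)) (abs_nonneg d)
              _ = 6 * (|d| * S) / t := by ring
              _ ≤ 6 * (|d| * |d|) / t := by gcongr

              _ = 6 * d^2 / t := by rw [abs_mul_abs_self]; ring
          have h2' : (2:ℝ) ≤ 2 * d^2 / t := by
            rw [le_div_iff₀ ht]; nlinarith
          have hq : (0:ℝ) ≤ d^2/t := by positivity
          have e1 : 2 * d^2 / t = 2*(d^2/t) := by ring
          have e2 : 6 * d^2 / t = 6*(d^2/t) := by ring
          have e3 : 24 * d^2 / t = 24*(d^2/t) := by ring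
          linarith [h6, h2']

lemma mainEst {t₁ t₂ a b M : ℝ} (h1 : 0 < t₁) (h2 : 0 < t₂) (Ψ : ℝ → ℝ)
    (hΨ : Measurable Ψ) (hM : ∀ z, |Ψ z| ≤ M) :
    |∫ z : ℝ, (gg t₂ (a - z) - gg t₁ (b - z)
        - (a - b) * (-((b - z)/(2*t₁)) * gg t₁ (b-z))) * Ψ z|
      ≤ 24 * M * (|t₂ - t₁| + (a-b)^2) / min t₂ t₁ := by
  have hM0 : 0 ≤ M := (abs_nonneg _).trans (hM 0)
  have hm : 0 < min t₂ t₁ := lt_min h2 h1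
  have iT : Integrable (fun z : ℝ => gg t₂ (a - z) - gg t₁ (a - z)) :=
    (int_gg a h2).sub (int_gg a h1)
  have iS : Integrable (fun z : ℝ => gg t₁ (a - z) - gg t₁ (b - z)
      - (a - b) * (-((b - z)/(2*t₁)) * gg t₁ (b-z))) :=
    ((int_gg a h1).sub (int_gg b h1)).sub ((int_fprime b h1).const_mul _)
  have iK : Integrable (fun z : ℝ => gg t₂ (a - z) - gg t₁ (b - z)
      - (a - b) * (-((b - z)/(2*t₁)) * gg t₁ (b-z))) :=
    ((int_gg a h2).sub (int_gg b h1)).sub ((int_fprime b h1).const_mul _)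
  have iKΨ : Integrable (fun z : ℝ => (gg t₂ (a - z) - gg t₁ (b - z)
      - (a - b) * (-((b - z)/(2*t₁)) * gg t₁ (b-z))) * Ψ z) := by
    apply Integrable.mono' (iK.abs.mul_const M) (iK.1.mul hΨ.aestronglyMeasurable)
    filter_upwards with z
    simp only [Pi.mul_apply]
    rw [Real.norm_eq_abs, abs_mul]
    exact mul_le_mul_of_nonneg_left (hM z) (abs_nonneg _)
  have hT : ∫ z : ℝ, |gg t₂ (a-z) - gg t₁ (a-z)| ≤ 12 * |t₂ - t₁| / min t₂ t₁ := by
    rw [min_comm]; exact timeL1 h1 h2 a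
  have hSp := spaceL1 h1 a b
  have hKle : ∫ z : ℝ, |gg t₂ (a - z) - gg t₁ (b - z)
      - (a - b) * (-((b - z)/(2*t₁)) * gg t₁ (b-z))|
      ≤ 24 * (|t₂ - t₁| + (a-b)^2) / min t₂ t₁ := by
    calc ∫ z : ℝ, |gg t₂ (a - z) - gg t₁ (b - z)
          - (a - b) * (-((b - z)/(2*t₁)) * gg t₁ (b-z))|
        ≤ ∫ z : ℝ, (|gg t₂ (a-z) - gg t₁ (a-z)|
            + |gg t₁ (a - z) - gg t₁ (b - z)
              - (a - b) * (-((b - z)/(2*t₁)) * gg t₁ (b-z))|) := by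
          apply integral_mono iK.abs (iT.abs.add iS.abs)
          intro z
          simp only [Pi.add_apply]
          have hzz : gg t₂ (a - z) - gg t₁ (b - z)
              - (a - b) * (-((b - z)/(2*t₁)) * gg t₁ (b-z))
              = (gg t₂ (a-z) - gg t₁ (a-z)) + (gg t₁ (a - z) - gg t₁ (b - z)
              - (a - b) * (-((b - z)/(2*t₁)) * gg t₁ (b-z))) := by ring
          rw [hzz]
          exact abs_add_le _ _
      _ = (∫ z : ℝ, |gg t₂ (a-z) - gg t₁ (a-z)|)
          + ∫ z : ℝ, |gg t₁ (a - z) - gg t₁ (b - z)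
              - (a - b) * (-((b - z)/(2*t₁)) * gg t₁ (b-z))| :=
          integral_add iT.abs iS.abs
      _ ≤ 12 * |t₂ - t₁| / min t₂ t₁ + 24 * (a-b)^2 / t₁ := add_le_add hT hSp
      _ ≤ 24 * (|t₂ - t₁| + (a-b)^2) / min t₂ t₁ := by
          have k1 : 24 * (a-b)^2 / t₁ ≤ 24 * (a-b)^2 / min t₂ t₁ := by
            gcongr
            exact min_le_right _ _
          have k2 : 12 * |t₂ - t₁| / min t₂ t₁ ≤ 24 * |t₂ - t₁| / min t₂ t₁ := by
            rw [div_le_div_iff₀ hm hm]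
            nlinarith [mul_nonneg (abs_nonneg (t₂ - t₁)) hm.le]
          have k3 : 24 * |t₂ - t₁| / min t₂ t₁ + 24 * (a-b)^2 / min t₂ t₁
              = 24 * (|t₂ - t₁| + (a-b)^2) / min t₂ t₁ := by ring
          linarith
  calc |∫ z : ℝ, (gg t₂ (a - z) - gg t₁ (b - z)
        - (a - b) * (-((b - z)/(2*t₁)) * gg t₁ (b-z))) * Ψ z|
      ≤ ∫ z : ℝ, |(gg t₂ (a - z) - gg t₁ (b - z)
        - (a - b) * (-((b - z)/(2*t₁)) * gg t₁ (b-z))) * Ψ z| := by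
        have hn := norm_integral_le_integral_norm (μ := volume)
            (fun z : ℝ => (gg t₂ (a - z) - gg t₁ (b - z)
              - (a - b) * (-((b - z)/(2*t₁)) * gg t₁ (b-z))) * Ψ z)
        simpa only [Real.norm_eq_abs] using hn
    _ ≤ ∫ z : ℝ, |gg t₂ (a - z) - gg t₁ (b - z)
        - (a - b) * (-((b - z)/(2*t₁)) * gg t₁ (b-z))| * M := by
        apply integral_mono iKΨ.abs (iK.abs.mul_const M)
        intro z
        simp only [Pi.mul_apply]
        rw [abs_mul]
        exact mul_le_mul_of_nonneg_left (hM z) (abs_nonneg _)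
    _ = (∫ z : ℝ, |gg t₂ (a - z) - gg t₁ (b - z)
        - (a - b) * (-((b - z)/(2*t₁)) * gg t₁ (b-z))|) * M := integral_mul_const M _
    _ ≤ (24 * (|t₂ - t₁| + (a-b)^2) / min t₂ t₁) * M :=
        mul_le_mul_of_nonneg_right hKle hM0
    _ = 24 * M * (|t₂ - t₁| + (a-b)^2) / min t₂ t₁ := by ring

theorem stmt3 :
    ∃ C : ℝ, 0 < C ∧
      ∀ Ψ : ℝ → ℝ, Measurable Ψ → ∀ M : ℝ, (∀ z, |Ψ z| ≤ M) →
        ∀ x₁ x₂ y₁ y₂ : ℝ, 0 < x₁ → 0 < y₁ →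
          |∫ z : ℝ, (heatG (x₁, x₂ - z) - heatG (y₁, y₂ - z)
              - (x₂ - y₂) * deriv (fun w => heatG (y₁, w)) (y₂ - z)) * Ψ z|
            ≤ C * M * (|x₁ - y₁| + |x₂ - y₂| ^ 2) / min x₁ y₁ := by
  refine ⟨24, by norm_num, ?_⟩
  intro Ψ hΨ M hM x₁ x₂ y₁ y₂ hx hy
  have hfun : (fun w => heatG (y₁, w)) = gg y₁ := funext (fun w => heatG_eq hy w)
  have hder : ∀ w, deriv (fun w => heatG (y₁, w)) w = -(w/(2*y₁)) * gg y₁ w := by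
    intro w; rw [hfun]; exact (gg_hasDerivAt_x hy w).deriv
  have hint_eq : (fun z : ℝ => (heatG (x₁, x₂ - z) - heatG (y₁, y₂ - z)
      - (x₂ - y₂) * deriv (fun w => heatG (y₁, w)) (y₂ - z)) * Ψ z)
      = fun z : ℝ => (gg x₁ (x₂ - z) - gg y₁ (y₂ - z)
      - (x₂ - y₂) * (-((y₂ - z)/(2*y₁)) * gg y₁ (y₂ - z))) * Ψ z := by
    funext z
    rw [heatG_eq hx, heatG_eq hy, hder]
  rw [hint_eq, show |x₂ - y₂| ^ 2 = (x₂ - y₂)^2 from sq_abs _]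
  exact mainEst hy hx Ψ hΨ hM
end
end

section
/- There exists a constant C > 0 such that for all s, t > 0, ∫_ℝ |G(t,z) − G(s,z)| dz ≤ C |t−s| / min(s,t). -/
noncomputable section

open MeasureTheory

namespace HeatAux

lemma rpow_eq_inv_sqrt {t : ℝ} (ht : 0 < t) :
    (4 * Real.pi * t) ^ (-(1:ℝ)/2) = (Real.sqrt (4 * Real.pi * t))⁻¹ := by
  have h4 : (0:ℝ) < 4 * Real.pi * t := by positivity
  rw [show (-(1:ℝ)/2) = -(1/2) by norm_num, Real.rpow_neg h4.le, ← Real.sqrt_eq_rpow]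

lemma heatG_pos_eq {t z : ℝ} (ht : 0 < t) :
    heatG (t, z) = (Real.sqrt (4 * Real.pi * t))⁻¹ * Real.exp (-(1/(4*t)) * z ^ 2) := by
  simp only [heatG, if_pos ht]
  rw [rpow_eq_inv_sqrt ht]
  congr 2
  field_simp

lemma heatG_nonneg (t z : ℝ) : 0 ≤ heatG (t, z) := by
  unfold heatG
  dsimp only
  split
  · have := Real.pi_pos
    positivity
  · exact le_refl 0

lemma integrable_heatG {t : ℝ} (ht : 0 < t) :
    Integrable (fun z : ℝ => heatG (t, z)) := by
  have h : (fun z : ℝ => heatG (t, z)) =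
      fun z : ℝ => (Real.sqrt (4 * Real.pi * t))⁻¹ * Real.exp (-(1/(4*t)) * z ^ 2) :=
    funext fun z => heatG_pos_eq ht
  rw [h]
  exact (integrable_exp_neg_mul_sq (by positivity)).const_mul _

lemma integral_heatG {t : ℝ} (ht : 0 < t) : ∫ z : ℝ, heatG (t, z) = 1 := by
  have h4 : (0:ℝ) < 4 * Real.pi * t := by positivity
  simp only [heatG_pos_eq ht]
  rw [integral_const_mul, integral_gaussian,
    show Real.pi / (1/(4*t)) = 4 * Real.pi * t by field_simp]
  exact inv_mul_cancel₀ (Real.sqrt_ne_zero'.mpr h4)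

lemma triv_bound {s t : ℝ} (hs : 0 < s) (ht : 0 < t) :
    ∫ z : ℝ, |heatG (t, z) - heatG (s, z)| ≤ 2 := by
  have h1 := integrable_heatG ht
  have h2 := integrable_heatG hs
  have key : ∫ z : ℝ, |heatG (t, z) - heatG (s, z)| ≤
      ∫ z : ℝ, (heatG (t, z) + heatG (s, z)) := by
    refine integral_mono (h1.sub h2).abs (h1.add h2) (fun z => ?_)
    have a1 := heatG_nonneg t z
    have a2 := heatG_nonneg s z
    rw [abs_le]
    constructor <;> linarith
  rw [integral_add h1 h2, integral_heatG ht, integral_heatG hs] at key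
  linarith

lemma hasDerivAt_heat (z : ℝ) {u : ℝ} (hu : 0 < u) :
    HasDerivAt (fun v : ℝ => (4 * Real.pi * v) ^ (-(1:ℝ)/2) * Real.exp (-(z ^ 2) / (4 * v)))
      ((4 * Real.pi * u) ^ (-(1:ℝ)/2) * Real.exp (-(z ^ 2) / (4 * u)) *
        (-(1/(2*u)) + z ^ 2 / (4 * u ^ 2))) u := by
  have h4 : (0:ℝ) < 4 * Real.pi * u := by positivity
  have hlin : HasDerivAt (fun v : ℝ => 4 * Real.pi * v) (4 * Real.pi) u := by
    simpa using (hasDerivAt_id u).const_mul (4 * Real.pi)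
  have hpow : HasDerivAt (fun v : ℝ => (4 * Real.pi * v) ^ (-(1:ℝ)/2))
      ((-(1:ℝ)/2) * (4 * Real.pi * u) ^ (-(1:ℝ)/2 - 1) * (4 * Real.pi)) u := by
    have h := (Real.hasDerivAt_rpow_const (x := 4 * Real.pi * u) (p := -(1:ℝ)/2)
      (Or.inl h4.ne')).comp u hlin
    exact h
  have hinner : HasDerivAt (fun v : ℝ => -(z ^ 2) / (4 * v)) (z ^ 2 / (4 * u ^ 2)) u := by
    have h := (hasDerivAt_inv hu.ne').const_mul (-(z ^ 2) / 4)
    have heq : (fun v : ℝ => -(z ^ 2) / 4 * v⁻¹) = fun v : ℝ => -(z ^ 2) / (4 * v) := by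
      funext v
      by_cases hv : v = 0
      · simp [hv]
      · field_simp
        try ring
    rw [heq] at h
    refine h.congr_deriv ?_
    field_simp
  have hexp := hinner.exp
  have hprod := hpow.mul hexp
  refine hprod.congr_deriv ?_
  rw [Real.rpow_sub_one h4.ne']
  field_simp

lemma mul_exp_le {x : ℝ} (hx : 0 ≤ x) : x * Real.exp (-x) ≤ 2 * Real.exp (-x / 2) := by
  have e1 : Real.exp (-x) = Real.exp (-x / 2) * Real.exp (-x / 2) := by
    rw [← Real.exp_add]; ring_nf
  have h2 : x * Real.exp (-x / 2) ≤ 2 := by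
    have hle : x ≤ 2 * Real.exp (x / 2) := by
      nlinarith [Real.add_one_le_exp (x / 2)]
    have hpos := Real.exp_pos (x / 2)
    have hinv : Real.exp (-x / 2) = (Real.exp (x / 2))⁻¹ := by
      rw [← Real.exp_neg]; ring_nf
    rw [hinv, mul_inv_le_iff₀ hpos]
    linarith
  calc x * Real.exp (-x) = (x * Real.exp (-x / 2)) * Real.exp (-x / 2) := by rw [e1]; ring
    _ ≤ 2 * Real.exp (-x / 2) := mul_le_mul_of_nonneg_right h2 (Real.exp_pos _).le

lemma deriv_bound {s t u z : ℝ} (hs : 0 < s) (hsu : s ≤ u) (hut : u ≤ t) :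
    |(4 * Real.pi * u) ^ (-(1:ℝ)/2) * Real.exp (-(z ^ 2) / (4 * u)) *
        (-(1/(2*u)) + z ^ 2 / (4 * u ^ 2))|
      ≤ (4 * Real.pi * s) ^ (-(1:ℝ)/2) * (5/(2*s)) * Real.exp (-(1/(8*t)) * z ^ 2) := by
  have hu : 0 < u := lt_of_lt_of_le hs hsu
  have ht : 0 < t := lt_of_lt_of_le hu hut
  set P : ℝ := (4 * Real.pi * u) ^ (-(1:ℝ)/2) with hP
  set Ps : ℝ := (4 * Real.pi * s) ^ (-(1:ℝ)/2) with hPs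
  set T : ℝ := Real.exp (-(1/(8*t)) * z ^ 2) with hT
  set x : ℝ := z ^ 2 / (4 * u) with hx
  have hx0 : 0 ≤ x := by positivity
  have hEeq : Real.exp (-(z ^ 2) / (4 * u)) = Real.exp (-x) := by
    rw [hx]; ring_nf
  have hPpos : 0 < P := Real.rpow_pos_of_pos (by positivity) _
  have hPspos : 0 < Ps := Real.rpow_pos_of_pos (by positivity) _
  have hPle : P ≤ Ps :=
    Real.rpow_le_rpow_of_nonpos (by positivity) (by nlinarith [Real.pi_pos]) (by norm_num)
  have hTpos : 0 < T := Real.exp_pos _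
  have hET : Real.exp (-x) ≤ T := by
    rw [hT]
    apply Real.exp_le_exp.mpr
    rw [hx]
    have h1 : (1:ℝ)/(8*t) ≤ 1/(4*u) :=
      one_div_le_one_div_of_le (by positivity) (by linarith)
    calc -(z ^ 2 / (4 * u)) = -((1/(4*u)) * z ^ 2) := by ring
      _ ≤ -((1/(8*t)) * z ^ 2) := neg_le_neg (mul_le_mul_of_nonneg_right h1 (sq_nonneg z))
      _ = -(1/(8*t)) * z ^ 2 := by ring
  have hhalfT : Real.exp (-x / 2) ≤ T := by
    rw [hT]
    apply Real.exp_le_exp.mpr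
    rw [hx]
    have h8 : (1:ℝ)/(8*t) ≤ 1/(8*u) := by
      apply one_div_le_one_div_of_le (by positivity)
      linarith
    have := mul_le_mul_of_nonneg_right h8 (sq_nonneg z)
    have heq : z ^ 2 / (4 * u) / 2 = 1/(8*u) * z ^ 2 := by ring
    rw [show -(z ^ 2 / (4 * u)) / 2 = -(1/(8*u) * z ^ 2) by ring]
    linarith
  -- bound the absolute value
  have hEpos : 0 < Real.exp (-(z ^ 2) / (4 * u)) := Real.exp_pos _
  have hw : |(-(1/(2*u)) + z ^ 2 / (4 * u ^ 2))| ≤ 1/(2*u) + z ^ 2 / (4 * u ^ 2) := by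
    have a1 : (0:ℝ) ≤ z ^ 2 / (4 * u ^ 2) := by positivity
    have a2 : (0:ℝ) ≤ 1/(2*u) := by positivity
    rw [abs_le]
    constructor <;> linarith
  have step1 : |P * Real.exp (-(z ^ 2) / (4 * u)) * (-(1/(2*u)) + z ^ 2 / (4 * u ^ 2))|
      ≤ P * Real.exp (-x) * (1/(2*u)) + P * (Real.exp (-x) * (z ^ 2 / (4 * u ^ 2))) := by
    rw [abs_mul, abs_of_nonneg (mul_nonneg hPpos.le hEpos.le), hEeq]
    calc P * Real.exp (-x) * |(-(1/(2*u)) + z ^ 2 / (4 * u ^ 2))|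
        ≤ P * Real.exp (-x) * (1/(2*u) + z ^ 2 / (4 * u ^ 2)) := by
          apply mul_le_mul_of_nonneg_left hw
          positivity
      _ = P * Real.exp (-x) * (1/(2*u)) + P * (Real.exp (-x) * (z ^ 2 / (4 * u ^ 2))) := by ring
  have t1 : P * Real.exp (-x) * (1/(2*u)) ≤ Ps * T * (1/(2*s)) := by
    have h1 : (1:ℝ)/(2*u) ≤ 1/(2*s) := by
      apply one_div_le_one_div_of_le (by positivity); linarith
    have hPE : P * Real.exp (-x) ≤ Ps * T :=
      mul_le_mul hPle hET (Real.exp_pos _).le hPspos.le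
    exact mul_le_mul hPE h1 (by positivity) (by positivity)
  have t2 : P * (Real.exp (-x) * (z ^ 2 / (4 * u ^ 2))) ≤ Ps * (T * (2/s)) := by
    have hrew : Real.exp (-x) * (z ^ 2 / (4 * u ^ 2)) = (1/u) * (x * Real.exp (-x)) := by
      rw [hx]; field_simp
    have hme := mul_exp_le hx0
    have hb1 : (1/u) * (x * Real.exp (-x)) ≤ (1/u) * (2 * Real.exp (-x/2)) :=
      mul_le_mul_of_nonneg_left hme (by positivity)
    have hb2 : (1/u) * (2 * Real.exp (-x/2)) ≤ (1/s) * (2 * T) := by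
      apply mul_le_mul (one_div_le_one_div_of_le hs hsu)
        (by linarith) (by positivity) (by positivity)
    have hi : Real.exp (-x) * (z ^ 2 / (4 * u ^ 2)) ≤ (1/s) * (2 * T) := by
      rw [hrew]; linarith
    calc P * (Real.exp (-x) * (z ^ 2 / (4 * u ^ 2))) ≤ Ps * ((1/s) * (2 * T)) :=
          mul_le_mul hPle hi (by positivity) hPspos.le
      _ = Ps * (T * (2/s)) := by ring
  calc |P * Real.exp (-(z ^ 2) / (4 * u)) * (-(1/(2*u)) + z ^ 2 / (4 * u ^ 2))|
      ≤ P * Real.exp (-x) * (1/(2*u)) + P * (Real.exp (-x) * (z ^ 2 / (4 * u ^ 2))) := step1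
    _ ≤ Ps * T * (1/(2*s)) + Ps * (T * (2/s)) := add_le_add t1 t2
    _ = Ps * (5/(2*s)) * T := by ring

lemma diff_le {s t : ℝ} (hs : 0 < s) (hst : s ≤ t) (z : ℝ) :
    |heatG (t, z) - heatG (s, z)| ≤
      (t - s) * ((4 * Real.pi * s) ^ (-(1:ℝ)/2) * (5/(2*s)) *
        Real.exp (-(1/(8*t)) * z ^ 2)) := by
  have ht : 0 < t := lt_of_lt_of_le hs hst
  set f : ℝ → ℝ := fun v => (4 * Real.pi * v) ^ (-(1:ℝ)/2) * Real.exp (-(z ^ 2) / (4 * v))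
    with hf
  set f' : ℝ → ℝ := fun v => (4 * Real.pi * v) ^ (-(1:ℝ)/2) * Real.exp (-(z ^ 2) / (4 * v)) *
    (-(1/(2*v)) + z ^ 2 / (4 * v ^ 2)) with hf'
  have hmvt := (convex_Icc s t).norm_image_sub_le_of_norm_hasDerivWithin_le
    (f := f) (f' := f')
    (fun u hu => (hasDerivAt_heat z (lt_of_lt_of_le hs hu.1)).hasDerivWithinAt)
    (C := (4 * Real.pi * s) ^ (-(1:ℝ)/2) * (5/(2*s)) * Real.exp (-(1/(8*t)) * z ^ 2))
    (fun u hu => by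
      rw [Real.norm_eq_abs]
      exact deriv_bound hs hu.1 hu.2)
    (Set.left_mem_Icc.mpr hst) (Set.right_mem_Icc.mpr hst)
  rw [Real.norm_eq_abs, Real.norm_eq_abs] at hmvt
  have h1 : heatG (t, z) = f t := by simp only [heatG, if_pos ht, hf]
  have h2 : heatG (s, z) = f s := by simp only [heatG, if_pos hs, hf]
  rw [h1, h2]
  calc |f t - f s| ≤ (4 * Real.pi * s) ^ (-(1:ℝ)/2) * (5/(2*s)) *
      Real.exp (-(1/(8*t)) * z ^ 2) * |t - s| := hmvt
    _ = (t - s) * ((4 * Real.pi * s) ^ (-(1:ℝ)/2) * (5/(2*s)) *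
      Real.exp (-(1/(8*t)) * z ^ 2)) := by
        rw [abs_of_nonneg (by linarith : (0:ℝ) ≤ t - s)]; ring

lemma main_close {s t : ℝ} (hs : 0 < s) (hst : s ≤ t) (ht2 : t ≤ 2*s) :
    ∫ z : ℝ, |heatG (t, z) - heatG (s, z)| ≤ 5 * (t - s) / s := by
  have ht : 0 < t := lt_of_lt_of_le hs hst
  have hint : Integrable (fun z : ℝ => |heatG (t, z) - heatG (s, z)|) :=
    ((integrable_heatG ht).sub (integrable_heatG hs)).abs
  have hintM : Integrable (fun z : ℝ => (t - s) * ((4 * Real.pi * s) ^ (-(1:ℝ)/2) * (5/(2*s)) *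
      Real.exp (-(1/(8*t)) * z ^ 2))) := by
    have := ((integrable_exp_neg_mul_sq (show (0:ℝ) < 1/(8*t) by positivity)).const_mul
      ((4 * Real.pi * s) ^ (-(1:ℝ)/2) * (5/(2*s)))).const_mul (t - s)
    simpa [mul_assoc] using this
  have h1 : ∫ z : ℝ, |heatG (t, z) - heatG (s, z)| ≤
      ∫ z : ℝ, (t - s) * ((4 * Real.pi * s) ^ (-(1:ℝ)/2) * (5/(2*s)) *
        Real.exp (-(1/(8*t)) * z ^ 2)) :=
    integral_mono hint hintM (fun z => diff_le hs hst z)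
  have h2 : ∫ z : ℝ, (t - s) * ((4 * Real.pi * s) ^ (-(1:ℝ)/2) * (5/(2*s)) *
      Real.exp (-(1/(8*t)) * z ^ 2)) =
      (t - s) * ((4 * Real.pi * s) ^ (-(1:ℝ)/2) * (5/(2*s)) *
        Real.sqrt (Real.pi / (1/(8*t)))) := by
    rw [integral_const_mul]
    congr 1
    rw [mul_assoc, integral_const_mul, integral_gaussian]
    try ring
  have hKG : (4 * Real.pi * s) ^ (-(1:ℝ)/2) * Real.sqrt (Real.pi / (1/(8*t))) ≤ 2 := by
    rw [rpow_eq_inv_sqrt hs, show Real.pi / (1/(8*t)) = 8 * Real.pi * t by field_simp]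
    have hsq : Real.sqrt (8 * Real.pi * t) ≤ 2 * Real.sqrt (4 * Real.pi * s) := by
      have h16 : Real.sqrt (8 * Real.pi * t) ≤ Real.sqrt (4 * (4 * Real.pi * s)) := by
        apply Real.sqrt_le_sqrt
        nlinarith [Real.pi_pos]
      rw [Real.sqrt_mul (by norm_num : (0:ℝ) ≤ 4),
        show Real.sqrt 4 = 2 by
          rw [show (4:ℝ) = 2 ^ 2 by norm_num, Real.sqrt_sq (by norm_num : (0:ℝ) ≤ 2)]] at h16
      exact h16
    have hspos : 0 < Real.sqrt (4 * Real.pi * s) := Real.sqrt_pos.mpr (by positivity)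
    calc (Real.sqrt (4 * Real.pi * s))⁻¹ * Real.sqrt (8 * Real.pi * t)
        ≤ (Real.sqrt (4 * Real.pi * s))⁻¹ * (2 * Real.sqrt (4 * Real.pi * s)) :=
          mul_le_mul_of_nonneg_left hsq (by positivity)
      _ = 2 := by field_simp
  have hts : 0 ≤ t - s := by linarith
  calc ∫ z : ℝ, |heatG (t, z) - heatG (s, z)|
      ≤ (t - s) * ((4 * Real.pi * s) ^ (-(1:ℝ)/2) * (5/(2*s)) *
        Real.sqrt (Real.pi / (1/(8*t)))) := by rw [← h2]; exact h1
    _ = ((4 * Real.pi * s) ^ (-(1:ℝ)/2) * Real.sqrt (Real.pi / (1/(8*t)))) *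
        ((t - s) * (5/(2*s))) := by ring
    _ ≤ 2 * ((t - s) * (5/(2*s))) := by
        apply mul_le_mul_of_nonneg_right hKG
        positivity
    _ = 5 * (t - s) / s := by field_simp

lemma main_le {s t : ℝ} (hs : 0 < s) (hst : s ≤ t) :
    ∫ z : ℝ, |heatG (t, z) - heatG (s, z)| ≤ 5 * (t - s) / s := by
  have ht : 0 < t := lt_of_lt_of_le hs hst
  rcases le_total t (2*s) with h2 | h2
  · exact main_close hs hst h2
  · have htriv := triv_bound hs ht
    have h5 : (2:ℝ) ≤ 5 * (t - s) / s := by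
      rw [le_div_iff₀ hs]
      nlinarith
    linarith

end HeatAux

theorem stmt4 :
    ∃ C : ℝ, 0 < C ∧ ∀ s t : ℝ, 0 < s → 0 < t →
      ∫ z : ℝ, |heatG (t, z) - heatG (s, z)| ≤ C * |t - s| / min s t := by
  refine ⟨5, by norm_num, fun s t hs ht => ?_⟩
  rcases le_total s t with h | h
  · rw [min_eq_left h, abs_of_nonneg (sub_nonneg.mpr h)]
    exact HeatAux.main_le hs h
  · rw [min_eq_right h, abs_of_nonpos (sub_nonpos.mpr h),
      show -(t - s) = s - t by ring]
    have hcomm : ∀ z : ℝ, |heatG (t, z) - heatG (s, z)| = |heatG (s, z) - heatG (t, z)| :=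
      fun z => abs_sub_comm _ _
    simp only [hcomm]
    exact HeatAux.main_le ht h
end
end

section
/- Let ψ : ℝ² → ℝ be twice continuously differentiable with compact support, and define T_ψ(ξ) := (∫_{ℝ²} |∂₁∂₂ψ(t,y)|² · |∫_0^t e^{iξu} du|² dt dy)^{1/2} for ξ ∈ ℝ. Then for all λ₁, λ₂ ∈ (0,2) with λ₁ + λ₂ > 3: (i) the integral ∫_{ℝ²} |T_ψ(x₁+x₂)|² |x₁|^{1−λ₁} |x₂|^{1−λ₂} dx₁ dx₂ is finite; (ii) there exist ε > 0 and C > 0 such that for every c ≥ 1 and each i ∈ {1,2}, ∫_{|x_i| ≥ c} |T_ψ(x₁+x₂)|² |x₁|^{1−λ₁} |x₂|^{1−λ₂} dx₁ dx₂ ≤ C c^{−ε}. -/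
noncomputable section

open MeasureTheory Set
open scoped ENNReal



/-- Partial derivative in the first variable. -/
def pd1 (f : ℝ × ℝ → ℝ) (p : ℝ × ℝ) : ℝ := deriv (fun t => f (t, p.2)) p.1

/-- Partial derivative in the second variable. -/
def pd2 (f : ℝ × ℝ → ℝ) (p : ℝ × ℝ) : ℝ := deriv (fun x => f (p.1, x)) p.2

/-- `T_ψ(ξ) = (∫ |∂₁∂₂ψ(t,y)|² |∫_0^t e^{iξu} du|² dt dy)^{1/2}`. -/
def Tpsi (ψ : ℝ × ℝ → ℝ) (ξ : ℝ) : ℝ :=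
  Real.sqrt (∫ p : ℝ × ℝ, |pd1 (pd2 ψ) p| ^ 2 *
    ‖∫ u in (0:ℝ)..p.1, Complex.exp (Complex.I * (ξ : ℂ) * (u : ℂ))‖ ^ 2)


lemma intOn_neg {f : ℝ → ℝ} {s : Set ℝ} (hs : MeasurableSet s) (h : IntegrableOn f s) :
    IntegrableOn (fun x => f (-x)) ((fun x : ℝ => -x) ⁻¹' s) := by
  have hmp : MeasurePreserving (fun x : ℝ => -x)
      (volume.restrict ((fun x : ℝ => -x) ⁻¹' s)) (volume.restrict s) := by
    constructor
    · exact measurable_neg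
    · rw [← Measure.restrict_map measurable_neg hs, Measure.map_neg_eq_self]
  exact (hmp.integrable_comp h.aestronglyMeasurable).2 h

lemma intOn_abs_rpow {a : ℝ} (ha : -1 < a) (c d : ℝ) :
    IntegrableOn (fun u : ℝ => |u| ^ a) (Icc c d) := by
  have key : ∀ M : ℝ, 0 ≤ M → IntegrableOn (fun u : ℝ => |u| ^ a) (Icc 0 M) := by
    intro M hM
    have h1 : IntegrableOn (fun u : ℝ => u ^ a) (Icc 0 M) := by
      have := (intervalIntegral.intervalIntegrable_rpow' (a := 0) (b := M) ha)
      rwa [intervalIntegrable_iff_integrableOn_Icc_of_le hM] at this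
    exact h1.congr_fun (fun u hu => by rw [abs_of_nonneg hu.1]) measurableSet_Icc
  set M := max |c| |d| with hMdef
  have hM : (0:ℝ) ≤ M := le_trans (abs_nonneg c) (le_max_left _ _)
  have hneg : IntegrableOn (fun u : ℝ => |u| ^ a) (Icc (-M) 0) := by
    have := intOn_neg (f := fun u : ℝ => |u| ^ a) measurableSet_Icc (key M hM)
    have hpre : ((fun x : ℝ => -x) ⁻¹' Icc 0 M) = Icc (-M) 0 := by
      ext x
      simp only [mem_preimage, mem_Icc, neg_le, le_neg, neg_zero]
      constructor <;> (intro h; constructor <;> linarith [h.1, h.2])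
    rw [hpre] at this
    exact this.congr_fun (fun u _ => by simp [abs_neg]) measurableSet_Icc
  have huni : IntegrableOn (fun u : ℝ => |u| ^ a) (Icc (-M) 0 ∪ Icc 0 M) := hneg.union (key M hM)
  refine huni.mono_set ?_
  intro u hu
  have h1 : -M ≤ u := by
    have := abs_le.mp (le_max_left |c| |d| |> fun h => le_trans (le_refl |c|) h)
    have hcu : c ≤ u := hu.1
    have : -M ≤ c := neg_le_of_neg_le (by
      have : |c| ≤ M := le_max_left _ _
      linarith [neg_abs_le c])
    linarith
  have h2 : u ≤ M := le_trans hu.2 (le_trans (le_abs_self d) (le_max_right _ _))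
  rcases le_total u 0 with h | h
  · exact Or.inl ⟨h1, h⟩
  · exact Or.inr ⟨h, h2⟩


lemma intOn_comp_add {f : ℝ → ℝ} {s : Set ℝ} (hs : MeasurableSet s) (h : IntegrableOn f s)
    (c : ℝ) : IntegrableOn (fun x => f (x + c)) ((fun x : ℝ => x + c) ⁻¹' s) := by
  have hmp : MeasurePreserving (fun x : ℝ => x + c)
      (volume.restrict ((fun x : ℝ => x + c) ⁻¹' s)) (volume.restrict s) := by
    constructor
    · exact measurable_add_const c
    · rw [← Measure.restrict_map (measurable_add_const c) hs, map_add_right_eq_self volume c]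
  exact (hmp.integrable_comp h.aestronglyMeasurable).2 h



lemma rpow_anti {x y z : ℝ} (hx : 0 < x) (hxy : x ≤ y) (hz : z ≤ 0) : y ^ z ≤ x ^ z :=
  Real.rpow_le_rpow_of_nonpos hx hxy hz

lemma lem1 {a b : ℝ} (ha0 : 0 < a) (ha1 : a < 1) (hb0 : 0 < b) (hb1 : b < 1)
    (hab : 1 < a + b) : Integrable (fun u : ℝ => |u| ^ (-a) * |1 - u| ^ (-b)) := by
  set f : ℝ → ℝ := fun u => |u| ^ (-a) * |1 - u| ^ (-b) with hf
  have hmeas : Measurable f :=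
    (measurable_id.abs.pow_const _).mul ((measurable_const.sub measurable_id).abs.pow_const _)
  have hnn : ∀ u, 0 ≤ f u := fun u =>
    mul_nonneg (Real.rpow_nonneg (abs_nonneg _) _) (Real.rpow_nonneg (abs_nonneg _) _)
  rw [← integrableOn_univ]
  have hcover : (univ : Set ℝ) ⊆ Iio (-1) ∪ (Icc (-1) (1/2) ∪ (Icc (1/2) 2 ∪ Ioi 2)) := by
    intro u _
    rcases lt_or_ge u (-1) with h | h
    · exact Or.inl h
    rcases le_or_gt u (1/2) with h2 | h2
    · exact Or.inr (Or.inl ⟨h, h2⟩)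
    rcases le_or_gt u 2 with h3 | h3
    · exact Or.inr (Or.inr (Or.inl ⟨h2.le, h3⟩))
    · exact Or.inr (Or.inr (Or.inr h3))
  refine IntegrableOn.mono_set ?_ hcover
  have hIoi : IntegrableOn f (Ioi 2) := by
    have hmaj : IntegrableOn (fun u : ℝ => 2 ^ b * u ^ (-(a+b))) (Ioi 2) :=
      (integrableOn_Ioi_rpow_of_lt (by linarith) (by norm_num)).const_mul _
    refine Integrable.mono' hmaj (hmeas.aestronglyMeasurable.restrict) ?_
    rw [ae_restrict_iff' measurableSet_Ioi]
    filter_upwards with u hu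
    have hu2 : (2:ℝ) < u := hu
    have h1u : |u| = u := abs_of_pos (by linarith)
    have h1mu : |1 - u| = u - 1 := by rw [abs_sub_comm]; exact abs_of_pos (by linarith)
    rw [Real.norm_eq_abs, abs_of_nonneg (hnn u), hf]
    simp only [h1u, h1mu]
    have hb2 : (u - 1) ^ (-b) ≤ (u/2) ^ (-b) := rpow_anti (by linarith) (by linarith) (by linarith)
    have ha2 : u ^ (-a) * (u-1) ^ (-b) ≤ u ^ (-a) * (u/2) ^ (-b) :=
      mul_le_mul_of_nonneg_left hb2 (Real.rpow_nonneg (by linarith) _)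
    refine le_trans ha2 (le_of_eq ?_)
    rw [Real.div_rpow (by linarith) (by norm_num), Real.rpow_neg (by norm_num : (0:ℝ) ≤ 2),
      div_inv_eq_mul, show u ^ (-(a+b)) = u ^ (-a) * u ^ (-b) by
        rw [← Real.rpow_add (by linarith)]; ring_nf]
    ring
  have hIio : IntegrableOn f (Iio (-1)) := by
    have hmaj : IntegrableOn (fun u : ℝ => u ^ (-(a+b))) (Ioi 1) :=
      integrableOn_Ioi_rpow_of_lt (by linarith) (by norm_num)
    have hneg := intOn_neg (f := fun u : ℝ => u ^ (-(a+b))) measurableSet_Ioi hmaj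
    have hpre : ((fun x : ℝ => -x) ⁻¹' Ioi 1) = Iio (-1) := by
      ext x; simp only [mem_preimage, mem_Ioi, mem_Iio]; constructor <;> intro h <;> linarith
    rw [hpre] at hneg
    refine Integrable.mono' hneg (hmeas.aestronglyMeasurable.restrict) ?_
    rw [ae_restrict_iff' measurableSet_Iio]
    filter_upwards with u hu
    have hu2 : u < -1 := hu
    have h1u : |u| = -u := abs_of_neg (by linarith)
    have h1mu : |1 - u| = 1 - u := abs_of_pos (by linarith)
    rw [Real.norm_eq_abs, abs_of_nonneg (hnn u), hf]
    simp only [h1u, h1mu]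
    have hb2 : (1 - u) ^ (-b) ≤ (-u) ^ (-b) := rpow_anti (by linarith) (by linarith) (by linarith)
    have ha2 : (-u) ^ (-a) * (1-u) ^ (-b) ≤ (-u) ^ (-a) * (-u) ^ (-b) :=
      mul_le_mul_of_nonneg_left hb2 (Real.rpow_nonneg (by linarith) _)
    refine le_trans ha2 (le_of_eq ?_)
    rw [← Real.rpow_add (by linarith)]; ring_nf
  have hmid1 : IntegrableOn f (Icc (-1) (1/2)) := by
    have hmaj : IntegrableOn (fun u : ℝ => 2 ^ b * |u| ^ (-a)) (Icc (-1) (1/2)) :=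
      (intOn_abs_rpow (by linarith) _ _).const_mul _
    refine Integrable.mono' hmaj (hmeas.aestronglyMeasurable.restrict) ?_
    rw [ae_restrict_iff' measurableSet_Icc]
    filter_upwards with u hu
    rw [Real.norm_eq_abs, abs_of_nonneg (hnn u), hf]
    have h1 : (1:ℝ)/2 ≤ |1 - u| := by
      rw [abs_of_pos (by linarith [hu.2] : (0:ℝ) < 1 - u)]; linarith [hu.2]
    have h2 : |1 - u| ^ (-b) ≤ (1/2 : ℝ) ^ (-b) := rpow_anti (by norm_num) h1 (by linarith)
    have h3 : ((1:ℝ)/2) ^ (-b) = 2 ^ b := by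
      rw [one_div, Real.inv_rpow (by norm_num : (0:ℝ) ≤ 2),
        Real.rpow_neg (by norm_num : (0:ℝ) ≤ 2), inv_inv]
    calc |u| ^ (-a) * |1 - u| ^ (-b) ≤ |u| ^ (-a) * 2 ^ b := by
          rw [← h3]; exact mul_le_mul_of_nonneg_left h2 (Real.rpow_nonneg (abs_nonneg _) _)
      _ = 2 ^ b * |u| ^ (-a) := by ring
  have hmid2 : IntegrableOn f (Icc (1/2) 2) := by
    have hmaj : IntegrableOn (fun u : ℝ => 2 ^ a * |1 - u| ^ (-b)) (Icc (1/2) 2) := by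
      have h0 : IntegrableOn (fun u : ℝ => |u| ^ (-b)) (Icc (-(1:ℝ)/2) 1) :=
        intOn_abs_rpow (by linarith) _ _
      have h1 : IntegrableOn (fun u : ℝ => |u - 1| ^ (-b)) (Icc (1/2) 2) := by
        have h2 := intOn_comp_add measurableSet_Icc h0 (-1)
        have hpre : ((fun x : ℝ => x + (-1)) ⁻¹' Icc (-(1:ℝ)/2) 1) = Icc (1/2) 2 := by
          ext x
          simp only [Set.mem_preimage, Set.mem_Icc]
          constructor <;> intro h <;> constructor <;> linarith [h.1, h.2]
        rw [hpre] at h2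
        exact h2.congr_fun (fun u _ => by dsimp only; rw [← sub_eq_add_neg]) measurableSet_Icc
      have h2 : IntegrableOn (fun u : ℝ => |1 - u| ^ (-b)) (Icc (1/2) 2) :=
        h1.congr_fun (fun u _ => by rw [abs_sub_comm]) measurableSet_Icc
      exact h2.const_mul _
    refine Integrable.mono' hmaj (hmeas.aestronglyMeasurable.restrict) ?_
    rw [ae_restrict_iff' measurableSet_Icc]
    filter_upwards with u hu
    rw [Real.norm_eq_abs, abs_of_nonneg (hnn u), hf]
    have h1 : (1:ℝ)/2 ≤ |u| := by rw [abs_of_pos (by linarith [hu.1])]; exact hu.1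
    have h2 : |u| ^ (-a) ≤ (1/2 : ℝ) ^ (-a) := rpow_anti (by norm_num) h1 (by linarith)
    have h3 : ((1:ℝ)/2) ^ (-a) = 2 ^ a := by
      rw [one_div, Real.inv_rpow (by norm_num : (0:ℝ) ≤ 2),
        Real.rpow_neg (by norm_num : (0:ℝ) ≤ 2), inv_inv]
    calc |u| ^ (-a) * |1 - u| ^ (-b) ≤ 2 ^ a * |1 - u| ^ (-b) := by
          rw [← h3]; exact mul_le_mul_of_nonneg_right h2 (Real.rpow_nonneg (abs_nonneg _) _)
      _ = 2 ^ a * |1 - u| ^ (-b) := rfl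
  exact hIio.union (hmid1.union (hmid2.union hIoi))



lemma lem2 {c : ℝ} (hc1 : -1 < c) (hc0 : c ≤ 0) :
    Integrable (fun s : ℝ => (1 + s ^ 2)⁻¹ * |s| ^ c) := by
  have hmeas : Measurable (fun s : ℝ => (1 + s ^ 2)⁻¹ * |s| ^ c) :=
    ((measurable_const.add (measurable_id.pow_const 2)).inv).mul (measurable_id.abs.pow_const _)
  have hnn : ∀ s : ℝ, 0 ≤ (1 + s ^ 2)⁻¹ * |s| ^ c := fun s =>
    mul_nonneg (inv_nonneg.2 (by positivity)) (Real.rpow_nonneg (abs_nonneg _) _)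
  rw [← integrableOn_univ]
  have hcover : (univ : Set ℝ) ⊆ Iio (-1) ∪ (Icc (-1) 1 ∪ Ioi 1) := by
    intro u _
    rcases lt_or_ge u (-1) with h | h
    · exact Or.inl h
    rcases le_or_gt u 1 with h2 | h2
    · exact Or.inr (Or.inl ⟨h, h2⟩)
    · exact Or.inr (Or.inr h2)
  refine IntegrableOn.mono_set ?_ hcover
  have hbig : ∀ s : ℝ, 1 ≤ |s| → ‖(1 + s ^ 2)⁻¹ * |s| ^ c‖ ≤ |s| ^ (-2 : ℝ) := by
    intro s hs
    rw [Real.norm_eq_abs, abs_of_nonneg (hnn s)]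
    have h1 : |s| ^ c ≤ 1 := Real.rpow_le_one_of_one_le_of_nonpos hs hc0
    have h2 : (1 + s ^ 2)⁻¹ ≤ |s| ^ (-2 : ℝ) := by
      rw [Real.rpow_neg (abs_nonneg s), show ((2:ℝ)) = ((2:ℕ):ℝ) by norm_num,
        Real.rpow_natCast, sq_abs]
      apply inv_anti₀ (by nlinarith [sq_abs s, abs_nonneg s]) (by nlinarith)
    calc (1 + s ^ 2)⁻¹ * |s| ^ c ≤ (1 + s ^ 2)⁻¹ * 1 :=
          mul_le_mul_of_nonneg_left h1 (inv_nonneg.2 (by positivity))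
      _ = (1 + s ^ 2)⁻¹ := mul_one _
      _ ≤ |s| ^ (-2:ℝ) := h2
  have hIoi : IntegrableOn (fun s : ℝ => (1 + s ^ 2)⁻¹ * |s| ^ c) (Ioi 1) := by
    have hmaj : IntegrableOn (fun s : ℝ => s ^ (-2:ℝ)) (Ioi 1) :=
      integrableOn_Ioi_rpow_of_lt (by norm_num) (by norm_num)
    refine Integrable.mono' hmaj (hmeas.aestronglyMeasurable.restrict) ?_
    rw [ae_restrict_iff' measurableSet_Ioi]
    filter_upwards with s hs
    have h1 : (1:ℝ) < s := hs
    refine (hbig s (by rw [abs_of_pos (by linarith)]; linarith)).trans_eq ?_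
    rw [abs_of_pos (by linarith : (0:ℝ) < s)]
  have hIio : IntegrableOn (fun s : ℝ => (1 + s ^ 2)⁻¹ * |s| ^ c) (Iio (-1)) := by
    have hmaj0 : IntegrableOn (fun s : ℝ => s ^ (-2:ℝ)) (Ioi 1) :=
      integrableOn_Ioi_rpow_of_lt (by norm_num) (by norm_num)
    have hneg := intOn_neg (f := fun s : ℝ => s ^ (-2:ℝ)) measurableSet_Ioi hmaj0
    have hpre : ((fun x : ℝ => -x) ⁻¹' Ioi 1) = Iio (-1) := by
      ext x; simp only [mem_preimage, mem_Ioi, mem_Iio]; constructor <;> intro h <;> linarith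
    rw [hpre] at hneg
    refine Integrable.mono' hneg (hmeas.aestronglyMeasurable.restrict) ?_
    rw [ae_restrict_iff' measurableSet_Iio]
    filter_upwards with s hs
    have h1 : s < -1 := hs
    refine (hbig s (by rw [abs_of_neg (by linarith)]; linarith)).trans_eq ?_
    rw [abs_of_neg (by linarith : s < 0)]
  have hmid : IntegrableOn (fun s : ℝ => (1 + s ^ 2)⁻¹ * |s| ^ c) (Icc (-1) 1) := by
    have hmaj : IntegrableOn (fun s : ℝ => |s| ^ c) (Icc (-1) 1) := intOn_abs_rpow hc1 _ _
    refine Integrable.mono' hmaj (hmeas.aestronglyMeasurable.restrict) ?_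
    rw [ae_restrict_iff' measurableSet_Icc]
    filter_upwards with s _
    rw [Real.norm_eq_abs, abs_of_nonneg (hnn s)]
    have : (1 + s ^ 2)⁻¹ ≤ 1 := by
      rw [inv_le_one_iff₀]; right; nlinarith
    calc (1 + s ^ 2)⁻¹ * |s| ^ c ≤ 1 * |s| ^ c :=
          mul_le_mul_of_nonneg_right this (Real.rpow_nonneg (abs_nonneg _) _)
      _ = |s| ^ c := one_mul _
  exact hIio.union (hmid.union hIoi)



lemma scale_lem {a b : ℝ} {s : ℝ} (hs : s ≠ 0) :
    ∫⁻ x : ℝ, ENNReal.ofReal (|x| ^ (-a) * |s - x| ^ (-b)) =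
      ENNReal.ofReal (|s| ^ (1 - a - b)) *
        ∫⁻ u : ℝ, ENNReal.ofReal (|u| ^ (-a) * |1 - u| ^ (-b)) := by
  set g : ℝ → ℝ≥0∞ := fun x => ENNReal.ofReal (|x| ^ (-a) * |s - x| ^ (-b)) with hg
  have hgm : Measurable g :=
    (((measurable_id.abs.pow_const _).mul
      ((measurable_const.sub measurable_id).abs.pow_const _))).ennreal_ofReal
  have hmap := Real.map_volume_mul_left hs
  have key : ∫⁻ u : ℝ, g (s * u) = ENNReal.ofReal |s⁻¹| * ∫⁻ x : ℝ, g x := by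
    rw [← lintegral_map hgm (measurable_const_mul s), hmap, lintegral_smul_measure, smul_eq_mul]
  have hval : ∀ u : ℝ, g (s * u) =
      ENNReal.ofReal (|s| ^ (-a-b)) * ENNReal.ofReal (|u| ^ (-a) * |1 - u| ^ (-b)) := by
    intro u
    have h1 : |s * u| ^ (-a) = |s| ^ (-a) * |u| ^ (-a) := by
      rw [abs_mul, Real.mul_rpow (abs_nonneg _) (abs_nonneg _)]
    have h2 : |s - s * u| ^ (-b) = |s| ^ (-b) * |1 - u| ^ (-b) := by
      rw [show s - s * u = s * (1 - u) by ring, abs_mul,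
        Real.mul_rpow (abs_nonneg _) (abs_nonneg _)]
    rw [hg]
    simp only
    rw [h1, h2, show |s| ^ (-a) * |u| ^ (-a) * (|s| ^ (-b) * |1 - u| ^ (-b)) =
      (|s| ^ (-a) * |s| ^ (-b)) * (|u| ^ (-a) * |1 - u| ^ (-b)) by ring,
      ← Real.rpow_add (abs_pos.2 hs), ENNReal.ofReal_mul (Real.rpow_nonneg (abs_nonneg _) _)]
    ring_nf
  have key2 : ∫⁻ u : ℝ, g (s * u) =
      ENNReal.ofReal (|s| ^ (-a-b)) * ∫⁻ u : ℝ, ENNReal.ofReal (|u| ^ (-a) * |1 - u| ^ (-b)) := by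
    rw [lintegral_congr hval]
    exact lintegral_const_mul _ (((measurable_id.abs.pow_const _).mul
      ((measurable_const.sub measurable_id).abs.pow_const _))).ennreal_ofReal
  have hsol : ∫⁻ x : ℝ, g x = ENNReal.ofReal |s| * ∫⁻ u : ℝ, g (s * u) := by
    rw [key, ← mul_assoc, ← ENNReal.ofReal_mul (abs_nonneg _)]
    rw [← abs_mul, mul_inv_cancel₀ hs]
    simp
  rw [hsol, key2, ← mul_assoc, ← ENNReal.ofReal_mul (abs_nonneg _)]
  congr 2
  rw [show (1 : ℝ) - a - b = 1 + (-a-b) by ring, Real.rpow_add (abs_pos.2 hs), Real.rpow_one]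

lemma lemA {a b : ℝ} (ha0 : 0 < a) (ha1 : a < 1) (hb0 : 0 < b) (hb1 : b < 1)
    (hab : 1 < a + b) :
    Integrable (fun x : ℝ × ℝ => (1 + (x.1 + x.2) ^ 2)⁻¹ * |x.1| ^ (-a) * |x.2| ^ (-b)) := by
  set F : ℝ × ℝ → ℝ := fun x => (1 + (x.1 + x.2) ^ 2)⁻¹ * |x.1| ^ (-a) * |x.2| ^ (-b) with hF
  have hFm : Measurable F :=
    (((measurable_const.add ((measurable_fst.add measurable_snd).pow_const 2)).inv).mul
      (measurable_fst.abs.pow_const _)).mul (measurable_snd.abs.pow_const _)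
  have hFnn : ∀ x, 0 ≤ F x := fun x =>
    mul_nonneg (mul_nonneg (inv_nonneg.2 (by positivity)) (Real.rpow_nonneg (abs_nonneg _) _))
      (Real.rpow_nonneg (abs_nonneg _) _)
  refine ⟨hFm.aestronglyMeasurable, ?_⟩
  rw [hasFiniteIntegral_iff_ofReal (Filter.Eventually.of_forall hFnn)]
  set K : ℝ≥0∞ := ∫⁻ u : ℝ, ENNReal.ofReal (|u| ^ (-a) * |1 - u| ^ (-b)) with hK
  have hKfin : K < ⊤ := by
    have h := (lem1 ha0 ha1 hb0 hb1 hab).hasFiniteIntegral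
    rw [hasFiniteIntegral_iff_ofReal (Filter.Eventually.of_forall (fun u =>
      mul_nonneg (Real.rpow_nonneg (abs_nonneg _) _) (Real.rpow_nonneg (abs_nonneg _) _)))] at h
    exact h
  -- iterated integral
  have hc : -1 < 1 - a - b := by linarith
  have hc0 : 1 - a - b ≤ 0 := by linarith
  have hL2fin : (∫⁻ s : ℝ, ENNReal.ofReal ((1 + s ^ 2)⁻¹ * |s| ^ (1 - a - b))) < ⊤ := by
    have h := (lem2 hc hc0).hasFiniteIntegral
    rwa [hasFiniteIntegral_iff_ofReal (Filter.Eventually.of_forall (fun s =>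
      mul_nonneg (inv_nonneg.2 (by positivity)) (Real.rpow_nonneg (abs_nonneg _) _)))] at h
  rw [Measure.volume_eq_prod, lintegral_prod _ (hFm.ennreal_ofReal.aemeasurable)]
  -- inner rewrite
  have hinner : ∀ x₁ : ℝ, (∫⁻ x₂ : ℝ, ENNReal.ofReal (F (x₁, x₂))) =
      ENNReal.ofReal (|x₁| ^ (-a)) *
        ∫⁻ s : ℝ, ENNReal.ofReal ((1 + s ^ 2)⁻¹ * |s - x₁| ^ (-b)) := by
    intro x₁
    have hgm : Measurable (fun s : ℝ => ENNReal.ofReal ((1 + s ^ 2)⁻¹ * |s - x₁| ^ (-b))) :=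
      (((measurable_const.add (measurable_id.pow_const 2)).inv).mul
        ((measurable_id.sub measurable_const).abs.pow_const _)).ennreal_ofReal
    have step1 : ∀ x₂ : ℝ, ENNReal.ofReal (F (x₁, x₂)) =
        ENNReal.ofReal (|x₁| ^ (-a)) *
          ENNReal.ofReal ((1 + (x₂ + x₁) ^ 2)⁻¹ * |x₂ + x₁ - x₁| ^ (-b)) := by
      intro x₂
      rw [← ENNReal.ofReal_mul (Real.rpow_nonneg (abs_nonneg _) _)]
      congr 1
      simp only [hF, add_sub_cancel_right]
      ring_nf
    have hm1 : Measurable (fun x₂ : ℝ =>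
        ENNReal.ofReal ((1 + (x₂ + x₁) ^ 2)⁻¹ * |x₂ + x₁ - x₁| ^ (-b))) :=
      ((((measurable_id.add_const x₁).pow_const 2).const_add 1).inv.mul
        (((measurable_id.add_const x₁).sub_const x₁).abs.pow_const _)).ennreal_ofReal
    rw [lintegral_congr step1, lintegral_const_mul _ hm1]
    congr 1
    exact lintegral_add_right_eq_self
      (fun s : ℝ => ENNReal.ofReal ((1 + s ^ 2)⁻¹ * |s - x₁| ^ (-b))) x₁
  rw [lintegral_congr hinner]
  -- swap
  have hHm : Measurable (Function.uncurry (fun x₁ s : ℝ =>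
      ENNReal.ofReal (|x₁| ^ (-a)) * ENNReal.ofReal ((1 + s ^ 2)⁻¹ * |s - x₁| ^ (-b)))) := by
    refine Measurable.mul (f := fun p : ℝ × ℝ => ENNReal.ofReal (|p.1| ^ (-a)))
      (g := fun p : ℝ × ℝ => ENNReal.ofReal ((1 + p.2 ^ 2)⁻¹ * |p.2 - p.1| ^ (-b))) ?_ ?_
    · exact (measurable_fst.abs.pow_const _).ennreal_ofReal
    · exact (((measurable_snd.pow_const 2).const_add 1).inv.mul
        ((measurable_snd.sub measurable_fst).abs.pow_const _)).ennreal_ofReal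
  have hswap : (∫⁻ x₁ : ℝ, ENNReal.ofReal (|x₁| ^ (-a)) *
      ∫⁻ s : ℝ, ENNReal.ofReal ((1 + s ^ 2)⁻¹ * |s - x₁| ^ (-b))) =
      ∫⁻ s : ℝ, ∫⁻ x₁ : ℝ, ENNReal.ofReal (|x₁| ^ (-a)) *
        ENNReal.ofReal ((1 + s ^ 2)⁻¹ * |s - x₁| ^ (-b)) := by
    rw [← lintegral_lintegral_swap hHm.aemeasurable]
    apply lintegral_congr
    intro x₁
    have hm : Measurable (fun y : ℝ => ENNReal.ofReal ((1 + y ^ 2)⁻¹ * |y - x₁| ^ (-b))) :=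
      (((measurable_id.pow_const 2).const_add 1).inv.mul
        ((measurable_id.sub_const x₁).abs.pow_const _)).ennreal_ofReal
    exact (lintegral_const_mul _ hm).symm
  rw [hswap]
  -- inner over x₁ for s ≠ 0
  have hinner2 : ∀ s : ℝ, s ≠ 0 → (∫⁻ x₁ : ℝ, ENNReal.ofReal (|x₁| ^ (-a)) *
      ENNReal.ofReal ((1 + s ^ 2)⁻¹ * |s - x₁| ^ (-b))) =
      ENNReal.ofReal ((1 + s ^ 2)⁻¹ * |s| ^ (1 - a - b)) * K := by
    intro s hs
    have hre : ∀ x₁ : ℝ, ENNReal.ofReal (|x₁| ^ (-a)) *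
        ENNReal.ofReal ((1 + s ^ 2)⁻¹ * |s - x₁| ^ (-b)) =
        ENNReal.ofReal ((1 + s ^ 2)⁻¹) * ENNReal.ofReal (|x₁| ^ (-a) * |s - x₁| ^ (-b)) := by
      intro x₁
      rw [← ENNReal.ofReal_mul (Real.rpow_nonneg (abs_nonneg _) _),
        ← ENNReal.ofReal_mul (inv_nonneg.2 (by positivity))]
      congr 1
      ring
    have hm2 : Measurable (fun x₁ : ℝ => ENNReal.ofReal (|x₁| ^ (-a) * |s - x₁| ^ (-b))) :=
      ((measurable_id.abs.pow_const _).mul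
        ((measurable_const.sub measurable_id).abs.pow_const _)).ennreal_ofReal
    rw [lintegral_congr hre, lintegral_const_mul _ hm2,
      scale_lem hs, ← hK, ← mul_assoc, ← ENNReal.ofReal_mul (inv_nonneg.2 (by positivity))]
  have hae : ∀ᵐ s : ℝ, (∫⁻ x₁ : ℝ, ENNReal.ofReal (|x₁| ^ (-a)) *
      ENNReal.ofReal ((1 + s ^ 2)⁻¹ * |s - x₁| ^ (-b))) =
      ENNReal.ofReal ((1 + s ^ 2)⁻¹ * |s| ^ (1 - a - b)) * K := by
    have h0 : (volume : Measure ℝ) {(0:ℝ)} = 0 := measure_singleton 0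
    filter_upwards [measure_eq_zero_iff_ae_notMem.mp h0] with s hs
    exact hinner2 s hs
  have hm3 : Measurable (fun s : ℝ => ENNReal.ofReal ((1 + s ^ 2)⁻¹ * |s| ^ (1 - a - b))) :=
    ((((measurable_id.pow_const 2).const_add 1).inv.mul
      (measurable_id.abs.pow_const _))).ennreal_ofReal
  rw [lintegral_congr_ae hae, lintegral_mul_const _ hm3]
  exact ENNReal.mul_lt_top hL2fin hKfin



lemma pd2_eq {ψ : ℝ × ℝ → ℝ} (hψ : ContDiff ℝ 2 ψ) (p : ℝ × ℝ) :
    pd2 ψ p = fderiv ℝ ψ p (0, 1) := by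
  have h1 : HasFDerivAt ψ (fderiv ℝ ψ p) p :=
    (hψ.differentiable (by norm_num)).differentiableAt.hasFDerivAt
  have h2 : HasDerivAt (fun x : ℝ => ((p.1 : ℝ), x)) ((0:ℝ), (1:ℝ)) p.2 := by
    have := ((hasDerivAt_const p.2 p.1).prodMk (hasDerivAt_id p.2))
    simpa using this
  have h3 : HasDerivAt (fun x : ℝ => ψ (p.1, x)) (fderiv ℝ ψ p (0, 1)) p.2 :=
    (h1.comp_hasDerivAt p.2 h2)
  exact h3.deriv

lemma pd2_contDiff {ψ : ℝ × ℝ → ℝ} (hψ : ContDiff ℝ 2 ψ) : ContDiff ℝ 1 (pd2 ψ) := by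
  have : ContDiff ℝ 1 (fun p : ℝ × ℝ => fderiv ℝ ψ p (0, 1)) :=
    (hψ.fderiv_right (by norm_num)).clm_apply contDiff_const
  have he : pd2 ψ = fun p : ℝ × ℝ => fderiv ℝ ψ p (0, 1) := funext (pd2_eq hψ)
  rw [he]
  exact this

lemma pd1_eq {g : ℝ × ℝ → ℝ} (hg : ContDiff ℝ 1 g) (p : ℝ × ℝ) :
    pd1 g p = fderiv ℝ g p (1, 0) := by
  have h1 : HasFDerivAt g (fderiv ℝ g p) p :=
    (hg.differentiable (by norm_num)).differentiableAt.hasFDerivAt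
  have h2 : HasDerivAt (fun t : ℝ => (t, (p.2 : ℝ))) ((1:ℝ), (0:ℝ)) p.1 := by
    have := ((hasDerivAt_id p.1).prodMk (hasDerivAt_const p.1 p.2))
    simpa using this
  exact ((h1.comp_hasDerivAt p.1 h2)).deriv

lemma D_cont {ψ : ℝ × ℝ → ℝ} (hψ : ContDiff ℝ 2 ψ) : Continuous (pd1 (pd2 ψ)) := by
  have hg := pd2_contDiff hψ
  have : Continuous (fun p : ℝ × ℝ => fderiv ℝ (pd2 ψ) p (1, 0)) :=
    ((hg.fderiv_right (m := 0) (by norm_num)).clm_apply contDiff_const).continuous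
  have he : pd1 (pd2 ψ) = fun p : ℝ × ℝ => fderiv ℝ (pd2 ψ) p (1, 0) := funext (pd1_eq hg)
  rw [he]; exact this

lemma D_supp {ψ : ℝ × ℝ → ℝ} (hψc : HasCompactSupport ψ) :
    HasCompactSupport (pd1 (pd2 ψ)) := by
  have hsub : Function.support (pd1 (pd2 ψ)) ⊆ tsupport ψ := by
    intro p hp
    by_contra hmem
    apply hp
    -- p in open complement of tsupport ψ
    have hU : IsOpen (tsupport ψ)ᶜ := (isClosed_tsupport ψ).isOpen_compl
    have hpd2 : ∀ q ∈ (tsupport ψ)ᶜ, pd2 ψ q = 0 := by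
      intro q hq
      have hev : (fun x : ℝ => ψ (q.1, x)) =ᶠ[nhds q.2] (fun _ => (0:ℝ)) := by
        have hcont : Continuous (fun x : ℝ => ((q.1 : ℝ), x)) := by continuity
        have : ∀ᶠ x in nhds q.2, ((q.1 : ℝ), x) ∈ (tsupport ψ)ᶜ :=
          hcont.continuousAt.preimage_mem_nhds (hU.mem_nhds (by simpa using hq))
        filter_upwards [this] with x hx
        exact image_eq_zero_of_notMem_tsupport hx
      rw [pd2, hev.deriv_eq, deriv_const]
    have hev1 : (fun t : ℝ => pd2 ψ (t, p.2)) =ᶠ[nhds p.1] (fun _ => (0:ℝ)) := by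
      have hcont : Continuous (fun t : ℝ => (t, (p.2 : ℝ))) := by continuity
      have : ∀ᶠ t in nhds p.1, (t, (p.2 : ℝ)) ∈ (tsupport ψ)ᶜ :=
        hcont.continuousAt.preimage_mem_nhds (hU.mem_nhds (by simpa using hmem))
      filter_upwards [this] with t ht
      exact hpd2 _ ht
    show pd1 (pd2 ψ) p = 0
    rw [pd1, hev1.deriv_eq, deriv_const]
  exact IsCompact.of_isClosed_subset hψc isClosed_closure
    (closure_minimal hsub (isClosed_tsupport ψ))

-- the oscillatory integral bound
lemma osc_bound (ξ t : ℝ) :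
    ‖∫ u in (0:ℝ)..t, Complex.exp (Complex.I * (ξ : ℂ) * (u : ℂ))‖ ^ 2
      ≤ 2 * (t ^ 2 + 4) * (1 + ξ ^ 2)⁻¹ := by
  have hnorm1 : ∀ u : ℝ, ‖Complex.exp (Complex.I * (ξ : ℂ) * (u : ℂ))‖ = 1 := by
    intro u
    rw [Complex.norm_exp]
    have : (Complex.I * (ξ : ℂ) * (u : ℂ)).re = 0 := by simp
    rw [this, Real.exp_zero]
  have hb1 : ‖∫ u in (0:ℝ)..t, Complex.exp (Complex.I * (ξ : ℂ) * (u : ℂ))‖ ≤ |t| := by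
    have := intervalIntegral.norm_integral_le_of_norm_le_const
      (C := 1) (f := fun u : ℝ => Complex.exp (Complex.I * (ξ : ℂ) * (u : ℂ)))
      (a := 0) (b := t) (fun u _ => le_of_eq (hnorm1 u))
    simpa using this
  rcases le_or_gt (ξ ^ 2) 1 with hcase | hcase
  · have h2 := sq_nonneg t
    have h3 : ‖∫ u in (0:ℝ)..t, Complex.exp (Complex.I * (ξ:ℂ) * (u:ℂ))‖ ^ 2 ≤ t ^ 2 := by
      rw [← sq_abs t]
      exact pow_le_pow_left₀ (norm_nonneg _) hb1 2
    have h4 : (0:ℝ) < 1 + ξ ^ 2 := by positivity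
    refine h3.trans ?_
    rw [show 2 * (t ^ 2 + 4) * (1 + ξ ^ 2)⁻¹ = 2 * (t ^ 2 + 4) / (1 + ξ ^ 2) by ring,
      le_div_iff₀ h4]
    nlinarith [sq_nonneg t, sq_nonneg ξ]
  · have hξ : (ξ : ℂ) ≠ 0 := by
      simp only [ne_eq, Complex.ofReal_eq_zero]
      intro h; rw [h] at hcase; norm_num at hcase
    have hIξ : Complex.I * (ξ:ℂ) ≠ 0 := mul_ne_zero Complex.I_ne_zero hξ
    have hint : (∫ u in (0:ℝ)..t, Complex.exp (Complex.I * (ξ:ℂ) * (u:ℂ)))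
        = (Complex.exp (Complex.I * ξ * t) - Complex.exp (Complex.I * ξ * 0)) / (Complex.I * ξ) := by
      have := integral_exp_mul_complex (c := Complex.I * ξ) hIξ (a := 0) (b := t)
      simpa using this
    have hb2 : ‖∫ u in (0:ℝ)..t, Complex.exp (Complex.I * (ξ:ℂ) * (u:ℂ))‖ ≤ 2 / |ξ| := by
      rw [hint, norm_div]
      have hnum : ‖Complex.exp (Complex.I * ξ * t) - Complex.exp (Complex.I * ξ * 0)‖ ≤ 2 := by
        refine (norm_sub_le _ _).trans ?_
        rw [hnorm1 t, show Complex.I * (ξ:ℂ) * 0 = 0 by ring, Complex.exp_zero]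
        norm_num
      have hden : ‖Complex.I * (ξ:ℂ)‖ = |ξ| := by
        rw [norm_mul, Complex.norm_I, one_mul, Complex.norm_real, Real.norm_eq_abs]
      rw [hden]
      have hξr : ξ ≠ 0 := by intro h; rw [h] at hcase; norm_num at hcase
      have hξpos : 0 < |ξ| := abs_pos.mpr hξr
      gcongr
    have hξr : ξ ≠ 0 := by intro h; rw [h] at hcase; norm_num at hcase
    have hsq : ‖∫ u in (0:ℝ)..t, Complex.exp (Complex.I * (ξ:ℂ) * (u:ℂ))‖ ^ 2 ≤ 4 / ξ ^ 2 := by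
      have h := pow_le_pow_left₀ (norm_nonneg _) hb2 2
      have he : (2 / |ξ|) ^ 2 = 4 / ξ ^ 2 := by
        rw [div_pow, sq_abs]; norm_num
      rwa [he] at h
    refine hsq.trans ?_
    have h1 : (0:ℝ) < ξ ^ 2 := by positivity
    have h2 : (0:ℝ) < 1 + ξ ^ 2 := by positivity
    rw [show 2 * (t ^ 2 + 4) * (1 + ξ ^ 2)⁻¹ = 2 * (t ^ 2 + 4) / (1 + ξ ^ 2) by ring,
      div_le_div_iff₀ h1 h2]
    nlinarith [sq_nonneg t]


set_option maxHeartbeats 1000000 in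
theorem stmt12 (ψ : ℝ × ℝ → ℝ) (hψ : ContDiff ℝ 2 ψ) (hψc : HasCompactSupport ψ)
    (lam₁ lam₂ : ℝ) (h₁ : lam₁ ∈ Set.Ioo (0:ℝ) 2) (h₂ : lam₂ ∈ Set.Ioo (0:ℝ) 2)
    (hsum : 3 < lam₁ + lam₂) :
    Integrable (fun x : ℝ × ℝ =>
      |Tpsi ψ (x.1 + x.2)| ^ 2 * |x.1| ^ (1 - lam₁) * |x.2| ^ (1 - lam₂)) ∧
    ∃ ε : ℝ, 0 < ε ∧ ∃ C : ℝ, 0 < C ∧ ∀ c : ℝ, 1 ≤ c →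
      (∫ x in {x : ℝ × ℝ | c ≤ |x.1|},
          |Tpsi ψ (x.1 + x.2)| ^ 2 * |x.1| ^ (1 - lam₁) * |x.2| ^ (1 - lam₂))
        ≤ C * c ^ (-ε) ∧
      (∫ x in {x : ℝ × ℝ | c ≤ |x.2|},
          |Tpsi ψ (x.1 + x.2)| ^ 2 * |x.1| ^ (1 - lam₁) * |x.2| ^ (1 - lam₂))
        ≤ C * c ^ (-ε) := by
  obtain ⟨hl1a, hl1b⟩ := h₁
  obtain ⟨hl2a, hl2b⟩ := h₂
  have h11 : 1 < lam₁ := by linarith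
  have h21 : 1 < lam₂ := by linarith
  -- the mixed derivative
  have hDc : Continuous (pd1 (pd2 ψ)) := D_cont hψ
  have hDs : HasCompactSupport (pd1 (pd2 ψ)) := D_supp hψc
  set D := pd1 (pd2 ψ) with hD
  -- the dominating weight A
  set g : ℝ × ℝ → ℝ := fun p => |D p| ^ 2 * (2 * (p.1 ^ 2 + 4)) with hgdef
  have hgc : Continuous g := by
    apply Continuous.mul
    · exact (hDc.abs).pow 2
    · continuity
  have hgs : HasCompactSupport g := by
    have h1 : HasCompactSupport (fun p : ℝ × ℝ => |D p|) := hDs.abs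
    have h2 : HasCompactSupport (fun p : ℝ × ℝ => |D p| * |D p|) := h1.mul_right
    have h3 : HasCompactSupport (fun p : ℝ × ℝ => (|D p| * |D p|) * (2 * (p.1 ^ 2 + 4))) :=
      h2.mul_right
    have : g = fun p : ℝ × ℝ => (|D p| * |D p|) * (2 * (p.1 ^ 2 + 4)) := by
      funext p; rw [hgdef]; ring
    rw [this]; exact h3
  have hgi : Integrable g := hgc.integrable_of_hasCompactSupport hgs
  set A : ℝ := ∫ p : ℝ × ℝ, g p with hAdef
  have hA0 : 0 ≤ A := integral_nonneg (fun p => by positivity)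
  -- pointwise bound on Tpsi squared
  have hT : ∀ ξ : ℝ, |Tpsi ψ ξ| ^ 2 ≤ A * (1 + ξ ^ 2)⁻¹ := by
    intro ξ
    have hI0 : 0 ≤ ∫ p : ℝ × ℝ, |D p| ^ 2 *
        ‖∫ u in (0:ℝ)..p.1, Complex.exp (Complex.I * (ξ:ℂ) * (u:ℂ))‖ ^ 2 :=
      integral_nonneg (fun p => by positivity)
    rw [Tpsi, abs_of_nonneg (Real.sqrt_nonneg _), Real.sq_sqrt hI0]
    have step : (∫ p : ℝ × ℝ, |D p| ^ 2 *
        ‖∫ u in (0:ℝ)..p.1, Complex.exp (Complex.I * (ξ:ℂ) * (u:ℂ))‖ ^ 2)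
        ≤ ∫ p : ℝ × ℝ, g p * (1 + ξ ^ 2)⁻¹ := by
      refine integral_mono_of_nonneg (Filter.Eventually.of_forall (fun p => by positivity))
        (hgi.mul_const _) (Filter.Eventually.of_forall (fun p => ?_))
      have hb := osc_bound ξ p.1
      calc |D p| ^ 2 * ‖∫ u in (0:ℝ)..p.1, Complex.exp (Complex.I * (ξ:ℂ) * (u:ℂ))‖ ^ 2
          ≤ |D p| ^ 2 * (2 * (p.1 ^ 2 + 4) * (1 + ξ ^ 2)⁻¹) :=
            mul_le_mul_of_nonneg_left hb (by positivity)
        _ = g p * (1 + ξ ^ 2)⁻¹ := by rw [hgdef]; ring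
    refine step.trans (le_of_eq ?_)
    rw [hAdef]
    exact integral_mul_const _ _
  -- measurability of x ↦ Tpsi ψ (x.1 + x.2)
  have hTm : Measurable (fun x : ℝ × ℝ => Tpsi ψ (x.1 + x.2)) := by
    have hparam : Continuous (fun q : ℝ × (ℝ × ℝ) =>
        ∫ u in (0:ℝ)..q.2.1, Complex.exp (Complex.I * (q.1:ℂ) * (u:ℂ))) := by
      apply intervalIntegral.continuous_parametric_intervalIntegral_of_continuous
        (f := fun (q : ℝ × (ℝ × ℝ)) (u : ℝ) => Complex.exp (Complex.I * (q.1:ℂ) * (u:ℂ)))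
      · apply Complex.continuous_exp.comp
        apply Continuous.mul
        · exact continuous_const.mul (Complex.continuous_ofReal.comp continuous_fst.fst)
        · exact Complex.continuous_ofReal.comp continuous_snd
      · exact continuous_snd.fst
    have hSm : StronglyMeasurable (fun ξ : ℝ => ∫ p : ℝ × ℝ, |D p| ^ 2 *
        ‖∫ u in (0:ℝ)..p.1, Complex.exp (Complex.I * (ξ:ℂ) * (u:ℂ))‖ ^ 2) := by
      apply StronglyMeasurable.integral_prod_right
        (f := fun (ξ : ℝ) (p : ℝ × ℝ) => |D p| ^ 2 *
          ‖∫ u in (0:ℝ)..p.1, Complex.exp (Complex.I * (ξ:ℂ) * (u:ℂ))‖ ^ 2)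
      apply Continuous.stronglyMeasurable
      apply Continuous.mul
      · exact ((hDc.comp continuous_snd).abs).pow 2
      · exact (hparam.norm).pow 2
    have hTpm : Measurable (Tpsi ψ) := by
      have : Tpsi ψ = fun ξ : ℝ => Real.sqrt (∫ p : ℝ × ℝ, |D p| ^ 2 *
          ‖∫ u in (0:ℝ)..p.1, Complex.exp (Complex.I * (ξ:ℂ) * (u:ℂ))‖ ^ 2) := rfl
      rw [this]
      exact Real.continuous_sqrt.measurable.comp hSm.measurable
    exact hTpm.comp (measurable_fst.add measurable_snd)
  -- the key integrability statement for a family of exponents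
  have key : ∀ l1 l2 : ℝ, 1 < l1 → l1 < 2 → 1 < l2 → l2 < 2 → 3 < l1 + l2 →
      Integrable (fun x : ℝ × ℝ =>
        |Tpsi ψ (x.1 + x.2)| ^ 2 * |x.1| ^ (1 - l1) * |x.2| ^ (1 - l2)) := by
    intro l1 l2 ha1 ha2 hb1 hb2 hab
    have hW : Integrable (fun x : ℝ × ℝ =>
        A * ((1 + (x.1 + x.2) ^ 2)⁻¹ * |x.1| ^ (-(l1-1)) * |x.2| ^ (-(l2-1)))) :=
      (lemA (by linarith) (by linarith) (by linarith) (by linarith) (by linarith)).const_mul A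
    refine Integrable.mono' hW ?_ (Filter.Eventually.of_forall (fun x => ?_))
    · exact (((hTm.abs.pow_const 2).mul (measurable_fst.abs.pow_const _)).mul
        (measurable_snd.abs.pow_const _)).aestronglyMeasurable
    · have hnn : 0 ≤ |Tpsi ψ (x.1 + x.2)| ^ 2 * |x.1| ^ (1 - l1) * |x.2| ^ (1 - l2) := by
        positivity
      rw [Real.norm_eq_abs, abs_of_nonneg hnn]
      have hexp1 : (1 - l1 : ℝ) = -(l1 - 1) := by ring
      have hexp2 : (1 - l2 : ℝ) = -(l2 - 1) := by ring
      rw [hexp1, hexp2]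
      calc |Tpsi ψ (x.1 + x.2)| ^ 2 * |x.1| ^ (-(l1-1)) * |x.2| ^ (-(l2-1))
          ≤ (A * (1 + (x.1 + x.2) ^ 2)⁻¹) * |x.1| ^ (-(l1-1)) * |x.2| ^ (-(l2-1)) := by
            have h1 := hT (x.1 + x.2)
            have h2 : (0:ℝ) ≤ |x.1| ^ (-(l1-1)) := Real.rpow_nonneg (abs_nonneg _) _
            have h3 : (0:ℝ) ≤ |x.2| ^ (-(l2-1)) := Real.rpow_nonneg (abs_nonneg _) _
            exact mul_le_mul_of_nonneg_right (mul_le_mul_of_nonneg_right h1 h2) h3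
        _ = A * ((1 + (x.1 + x.2) ^ 2)⁻¹ * |x.1| ^ (-(l1-1)) * |x.2| ^ (-(l2-1))) := by ring
  constructor
  · exact key lam₁ lam₂ h11 hl1b h21 hl2b hsum
  -- part (ii)
  set ε : ℝ := (lam₁ + lam₂ - 3) / 2 with hεdef
  have hε : 0 < ε := by rw [hεdef]; linarith
  have hε1 : lam₁ - 1 - ε > 0 := by rw [hεdef]; linarith
  have hε2 : lam₂ - 1 - ε > 0 := by rw [hεdef]; linarith
  -- majorants
  have hM₁ : Integrable (fun x : ℝ × ℝ =>
      A * ((1 + (x.1 + x.2) ^ 2)⁻¹ * |x.1| ^ (-(lam₁-1-ε)) * |x.2| ^ (-(lam₂-1)))) :=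
    (lemA hε1 (by linarith) (by linarith) (by linarith) (by rw [hεdef]; linarith)).const_mul A
  have hM₂ : Integrable (fun x : ℝ × ℝ =>
      A * ((1 + (x.1 + x.2) ^ 2)⁻¹ * |x.1| ^ (-(lam₁-1)) * |x.2| ^ (-(lam₂-1-ε)))) :=
    (lemA (by linarith) (by linarith) hε2 (by linarith) (by rw [hεdef]; linarith)).const_mul A
  set C₁ : ℝ := ∫ x : ℝ × ℝ,
      A * ((1 + (x.1 + x.2) ^ 2)⁻¹ * |x.1| ^ (-(lam₁-1-ε)) * |x.2| ^ (-(lam₂-1))) with hC₁def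
  set C₂ : ℝ := ∫ x : ℝ × ℝ,
      A * ((1 + (x.1 + x.2) ^ 2)⁻¹ * |x.1| ^ (-(lam₁-1)) * |x.2| ^ (-(lam₂-1-ε))) with hC₂def
  have hC₁0 : 0 ≤ C₁ := integral_nonneg (fun x => by positivity)
  have hC₂0 : 0 ≤ C₂ := integral_nonneg (fun x => by positivity)
  refine ⟨ε, hε, max C₁ C₂ + 1, by positivity, fun c hc => ?_⟩
  have hc0 : (0:ℝ) < c := by linarith
  have hcε : (0:ℝ) < c ^ (-ε) := Real.rpow_pos_of_pos hc0 _
  have hGi := key lam₁ lam₂ h11 hl1b h21 hl2b hsum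
  have hGnn : ∀ x : ℝ × ℝ,
      0 ≤ |Tpsi ψ (x.1 + x.2)| ^ 2 * |x.1| ^ (1 - lam₁) * |x.2| ^ (1 - lam₂) :=
    fun x => by positivity
  constructor
  · -- region c ≤ |x.1|
    have hset : MeasurableSet {x : ℝ × ℝ | c ≤ |x.1|} :=
      measurableSet_le measurable_const measurable_fst.abs
    have hmono : ∫ x in {x : ℝ × ℝ | c ≤ |x.1|},
        |Tpsi ψ (x.1 + x.2)| ^ 2 * |x.1| ^ (1 - lam₁) * |x.2| ^ (1 - lam₂)
        ≤ ∫ x in {x : ℝ × ℝ | c ≤ |x.1|}, c ^ (-ε) *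
          (A * ((1 + (x.1 + x.2) ^ 2)⁻¹ * |x.1| ^ (-(lam₁-1-ε)) * |x.2| ^ (-(lam₂-1)))) := by
      refine setIntegral_mono_on hGi.integrableOn ((hM₁.const_mul _).integrableOn) hset ?_
      intro x hx
      have hx1 : (1:ℝ) ≤ |x.1| := le_trans hc hx
      have hx1p : (0:ℝ) < |x.1| := by linarith
      have hsplit : |x.1| ^ (1 - lam₁) = |x.1| ^ (-(lam₁-1-ε)) * |x.1| ^ (-ε) := by
        rw [← Real.rpow_add hx1p]; ring_nf
      have hdec : |x.1| ^ (-ε) ≤ c ^ (-ε) :=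
        Real.rpow_le_rpow_of_nonpos hc0 hx (by linarith)
      have hT1 := hT (x.1 + x.2)
      have hr2 : (0:ℝ) ≤ |x.2| ^ (1 - lam₂) := Real.rpow_nonneg (abs_nonneg _) _
      have hr1 : (0:ℝ) ≤ |x.1| ^ (-(lam₁-1-ε)) := Real.rpow_nonneg (abs_nonneg _) _
      calc |Tpsi ψ (x.1 + x.2)| ^ 2 * |x.1| ^ (1 - lam₁) * |x.2| ^ (1 - lam₂)
          = (|Tpsi ψ (x.1 + x.2)| ^ 2 * |x.2| ^ (1 - lam₂) * |x.1| ^ (-(lam₁-1-ε)))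
            * |x.1| ^ (-ε) := by rw [hsplit]; ring
        _ ≤ ((A * (1 + (x.1 + x.2) ^ 2)⁻¹) * |x.2| ^ (1 - lam₂) * |x.1| ^ (-(lam₁-1-ε)))
            * c ^ (-ε) := by
            apply mul_le_mul
            · exact mul_le_mul_of_nonneg_right (mul_le_mul_of_nonneg_right hT1 hr2) hr1
            · exact hdec
            · positivity
            · positivity
        _ = c ^ (-ε) * (A * ((1 + (x.1 + x.2) ^ 2)⁻¹ * |x.1| ^ (-(lam₁-1-ε))
            * |x.2| ^ (-(lam₂-1)))) := by
            rw [show (1 - lam₂ : ℝ) = -(lam₂-1) by ring]; ring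
    refine hmono.trans ?_
    have hle2 : ∫ x in {x : ℝ × ℝ | c ≤ |x.1|}, c ^ (-ε) *
        (A * ((1 + (x.1 + x.2) ^ 2)⁻¹ * |x.1| ^ (-(lam₁-1-ε)) * |x.2| ^ (-(lam₂-1))))
        ≤ ∫ x : ℝ × ℝ, c ^ (-ε) *
        (A * ((1 + (x.1 + x.2) ^ 2)⁻¹ * |x.1| ^ (-(lam₁-1-ε)) * |x.2| ^ (-(lam₂-1)))) :=
      setIntegral_le_integral (hM₁.const_mul _)
        (Filter.Eventually.of_forall (fun x => by positivity))
    refine hle2.trans ?_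
    rw [integral_const_mul, ← hC₁def]
    have : c ^ (-ε) * C₁ ≤ c ^ (-ε) * (max C₁ C₂ + 1) :=
      mul_le_mul_of_nonneg_left (by
        have := le_max_left C₁ C₂; linarith) (le_of_lt hcε)
    linarith [this]
  · -- region c ≤ |x.2|
    have hset : MeasurableSet {x : ℝ × ℝ | c ≤ |x.2|} :=
      measurableSet_le measurable_const measurable_snd.abs
    have hmono : ∫ x in {x : ℝ × ℝ | c ≤ |x.2|},
        |Tpsi ψ (x.1 + x.2)| ^ 2 * |x.1| ^ (1 - lam₁) * |x.2| ^ (1 - lam₂)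
        ≤ ∫ x in {x : ℝ × ℝ | c ≤ |x.2|}, c ^ (-ε) *
          (A * ((1 + (x.1 + x.2) ^ 2)⁻¹ * |x.1| ^ (-(lam₁-1)) * |x.2| ^ (-(lam₂-1-ε)))) := by
      refine setIntegral_mono_on hGi.integrableOn ((hM₂.const_mul _).integrableOn) hset ?_
      intro x hx
      have hx1 : (1:ℝ) ≤ |x.2| := le_trans hc hx
      have hx1p : (0:ℝ) < |x.2| := by linarith
      have hsplit : |x.2| ^ (1 - lam₂) = |x.2| ^ (-(lam₂-1-ε)) * |x.2| ^ (-ε) := by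
        rw [← Real.rpow_add hx1p]; ring_nf
      have hdec : |x.2| ^ (-ε) ≤ c ^ (-ε) :=
        Real.rpow_le_rpow_of_nonpos hc0 hx (by linarith)
      have hT1 := hT (x.1 + x.2)
      have hr2 : (0:ℝ) ≤ |x.1| ^ (1 - lam₁) := Real.rpow_nonneg (abs_nonneg _) _
      have hr1 : (0:ℝ) ≤ |x.2| ^ (-(lam₂-1-ε)) := Real.rpow_nonneg (abs_nonneg _) _
      calc |Tpsi ψ (x.1 + x.2)| ^ 2 * |x.1| ^ (1 - lam₁) * |x.2| ^ (1 - lam₂)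
          = (|Tpsi ψ (x.1 + x.2)| ^ 2 * |x.1| ^ (1 - lam₁) * |x.2| ^ (-(lam₂-1-ε)))
            * |x.2| ^ (-ε) := by rw [hsplit]; ring
        _ ≤ ((A * (1 + (x.1 + x.2) ^ 2)⁻¹) * |x.1| ^ (1 - lam₁) * |x.2| ^ (-(lam₂-1-ε)))
            * c ^ (-ε) := by
            apply mul_le_mul
            · exact mul_le_mul_of_nonneg_right (mul_le_mul_of_nonneg_right hT1 hr2) hr1
            · exact hdec
            · positivity
            · positivity
        _ = c ^ (-ε) * (A * ((1 + (x.1 + x.2) ^ 2)⁻¹ * |x.1| ^ (-(lam₁-1))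
            * |x.2| ^ (-(lam₂-1-ε)))) := by
            rw [show (1 - lam₁ : ℝ) = -(lam₁-1) by ring]; ring
    refine hmono.trans ?_
    have hle2 : ∫ x in {x : ℝ × ℝ | c ≤ |x.2|}, c ^ (-ε) *
        (A * ((1 + (x.1 + x.2) ^ 2)⁻¹ * |x.1| ^ (-(lam₁-1)) * |x.2| ^ (-(lam₂-1-ε))))
        ≤ ∫ x : ℝ × ℝ, c ^ (-ε) *
        (A * ((1 + (x.1 + x.2) ^ 2)⁻¹ * |x.1| ^ (-(lam₁-1)) * |x.2| ^ (-(lam₂-1-ε)))) :=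
      setIntegral_le_integral (hM₂.const_mul _)
        (Filter.Eventually.of_forall (fun x => by positivity))
    refine hle2.trans ?_
    rw [integral_const_mul, ← hC₂def]
    have : c ^ (-ε) * C₂ ≤ c ^ (-ε) * (max C₁ C₂ + 1) :=
      mul_le_mul_of_nonneg_left (by
        have := le_max_right C₁ C₂; linarith) (le_of_lt hcε)
    linarith [this]
end
end
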